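/- arXiv:1001.0312 — 3 statements merged into one kernel-verified Lean document; each statement's English description precedes it below -/
import Mathlib

section
/- Corollary (recurrence from combinatorial telescoping for Watson's identity): Let n ≥ 1 be an integer and N a nonnegative integer, and write p_{n,k}(N) for the number of elements of P_{n,k} of weight N (with p_{n,k}(N) = 0 if N < 0). Then ∑_{k=0}^∞ (−1)^k p_{n,k}(N) = ∑_{k=0}^∞ (−1)^k p_{n,k}(N − n) + ∑_{k=0}^∞ (−1)^k p_{n−1,k}(N − (2n−1)); all sums over k have only finitely many nonzero terms. -/
open PowerSeries

/-- `P n k` is the set of pairs `(λ, μ)` of partitions such that `λ` has exactly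
`n - 2k` parts, every part of `λ` is at least `k` (and positive), no part of `λ`
equals `2k`, and every part of `μ` lies in `{1, …, k}`; it is empty when `n < 2k`. -/
def P (n k : ℕ) : Set (Multiset ℕ × Multiset ℕ) :=
  {p | p.1.card + 2 * k = n ∧ (∀ x ∈ p.1, k ≤ x ∧ 1 ≤ x ∧ x ≠ 2 * k) ∧
    ∀ x ∈ p.2, 1 ≤ x ∧ x ≤ k}

/-- The weight of an element of `P n k`: `k(5k-1)/2 + |λ| + |μ|`. -/
def wt (k : ℕ) (p : Multiset ℕ × Multiset ℕ) : ℕ :=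
  k * (5 * k - 1) / 2 + p.1.sum + p.2.sum

namespace WatsonAux

/-- partitions into exactly `m` parts, each `≥ k` (and positive), avoiding `2k`, with sum `s` -/
def SL (m k s : ℕ) : Set (Multiset ℕ) :=
  {l | (∀ x ∈ l, k ≤ x ∧ 1 ≤ x ∧ x ≠ 2 * k) ∧ Multiset.card l = m ∧ l.sum = s}

/-- partitions into exactly `m` parts, each `≥ k` (and positive), with sum `s` -/
def SF (m k s : ℕ) : Set (Multiset ℕ) :=
  {l | (∀ x ∈ l, k ≤ x ∧ 1 ≤ x) ∧ Multiset.card l = m ∧ l.sum = s}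

/-- partitions into at most `m` (positive) parts with sum `t` -/
def SD (m t : ℕ) : Set (Multiset ℕ) :=
  {l | (∀ x ∈ l, 1 ≤ x) ∧ Multiset.card l ≤ m ∧ l.sum = t}

/-- partitions into parts in `[1, r]` with sum `s` -/
def SM (r s : ℕ) : Set (Multiset ℕ) :=
  {l | (∀ x ∈ l, 1 ≤ x ∧ x ≤ r) ∧ l.sum = s}

/-- pairs: an `SL`-partition and an `SM`-partition with total sum `W` -/
def SP (m k r W : ℕ) : Set (Multiset ℕ × Multiset ℕ) :=
  {p | (∀ x ∈ p.1, k ≤ x ∧ 1 ≤ x ∧ x ≠ 2 * k) ∧ Multiset.card p.1 = m ∧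
       (∀ x ∈ p.2, 1 ≤ x ∧ x ≤ r) ∧ p.1.sum + p.2.sum = W}

lemma finite_sum_eq (s : ℕ) : {l : Multiset ℕ | (∀ x ∈ l, 1 ≤ x) ∧ l.sum = s}.Finite := by
  have h : {l : Multiset ℕ | (∀ x ∈ l, 1 ≤ x) ∧ l.sum = s} ⊆
      Set.range (fun p : Nat.Partition s => p.parts) := by
    rintro l ⟨h1, h2⟩
    exact ⟨⟨l, fun {i} hi => h1 i hi, h2⟩, rfl⟩
  exact (Set.finite_range _).subset h

lemma finite_sum_le (s : ℕ) : {l : Multiset ℕ | (∀ x ∈ l, 1 ≤ x) ∧ l.sum ≤ s}.Finite := by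
  have h : {l : Multiset ℕ | (∀ x ∈ l, 1 ≤ x) ∧ l.sum ≤ s} ⊆
      ⋃ t ∈ Finset.range (s+1), {l : Multiset ℕ | (∀ x ∈ l, 1 ≤ x) ∧ l.sum = t} := by
    rintro l ⟨h1, h2⟩
    exact Set.mem_biUnion (Finset.mem_coe.2 (Finset.mem_range.2 (by omega))) ⟨h1, rfl⟩
  exact (Set.Finite.biUnion (Finset.range (s+1)).finite_toSet
    (fun t _ => finite_sum_eq t)).subset h

lemma SL_finite (m k s : ℕ) : (SL m k s).Finite :=
  (finite_sum_eq s).subset (fun l hl => ⟨fun x hx => (hl.1 x hx).2.1, hl.2.2⟩)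

lemma SF_finite (m k s : ℕ) : (SF m k s).Finite :=
  (finite_sum_eq s).subset (fun l hl => ⟨fun x hx => (hl.1 x hx).2, hl.2.2⟩)

lemma SD_finite (m t : ℕ) : (SD m t).Finite :=
  (finite_sum_eq t).subset (fun l hl => ⟨hl.1, hl.2.2⟩)

lemma SM_finite (r s : ℕ) : (SM r s).Finite :=
  (finite_sum_eq s).subset (fun l hl => ⟨fun x hx => (hl.1 x hx).1, hl.2⟩)

lemma SP_finite (m k r W : ℕ) : (SP m k r W).Finite := by
  have h : SP m k r W ⊆
      {l : Multiset ℕ | (∀ x ∈ l, 1 ≤ x) ∧ l.sum ≤ W} ×ˢ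
      {l : Multiset ℕ | (∀ x ∈ l, 1 ≤ x) ∧ l.sum ≤ W} := by
    rintro ⟨l, mu⟩ ⟨h1, h2, h3, h4⟩
    exact ⟨⟨fun x hx => (h1 x hx).2.1, by omega⟩, ⟨fun x hx => (h3 x hx).1, by omega⟩⟩
  exact ((finite_sum_le W).prod (finite_sum_le W)).subset h

lemma ncard_split {α : Type*} (S A B : Set α) (h : S = A ∪ B) (hd : Disjoint A B)
    (hA : A.Finite) (hB : B.Finite) : S.ncard = A.ncard + B.ncard := by
  subst h; exact Set.ncard_union_eq hd hA hB


/-- Surgery: peel the parts equal to `r` for `SM`. -/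
lemma SM_rec (r s : ℕ) (hr : 1 ≤ r) :
    (SM r s).ncard = (SM (r-1) s).ncard + (if r ≤ s then (SM r (s-r)).ncard else 0) := by
  classical
  have hsplit : SM r s = SM (r-1) s ∪ {l | l ∈ SM r s ∧ r ∈ l} := by
    ext l
    simp only [SM, Set.mem_setOf_eq, Set.mem_union]
    constructor
    · rintro ⟨h1, h2⟩
      by_cases hm : r ∈ l
      · exact Or.inr ⟨⟨h1, h2⟩, hm⟩
      · refine Or.inl ⟨fun x hx => ⟨(h1 x hx).1, ?_⟩, h2⟩
        have hx2 := (h1 x hx).2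
        have hxr : x ≠ r := fun h => hm (h ▸ hx)
        omega
    · rintro (⟨h1, h2⟩ | ⟨⟨h1, h2⟩, _⟩)
      · exact ⟨fun x hx => ⟨(h1 x hx).1, by have := (h1 x hx).2; omega⟩, h2⟩
      · exact ⟨h1, h2⟩
  have hdisj : Disjoint (SM (r-1) s) {l | l ∈ SM r s ∧ r ∈ l} := by
    rw [Set.disjoint_left]
    rintro l ⟨h1, _⟩ ⟨_, hm⟩
    have := (h1 r hm).2
    omega
  by_cases hrs : r ≤ s
  · have himg : {l | l ∈ SM r s ∧ r ∈ l} = (fun ν => r ::ₘ ν) '' SM r (s - r) := by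
      ext l
      simp only [Set.mem_setOf_eq, Set.mem_image, SM]
      constructor
      · rintro ⟨⟨h1, h2⟩, hm⟩
        refine ⟨l.erase r, ⟨fun x hx => h1 x (Multiset.mem_of_mem_erase hx), ?_⟩,
          Multiset.cons_erase hm⟩
        have hc : r ::ₘ l.erase r = l := Multiset.cons_erase hm
        have hs2 : (r ::ₘ l.erase r).sum = l.sum := by rw [hc]
        rw [Multiset.sum_cons] at hs2
        omega
      · rintro ⟨ν, ⟨h1, h2⟩, rfl⟩
        refine ⟨⟨?_, ?_⟩, Multiset.mem_cons_self r ν⟩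
        · intro x hx
          rcases Multiset.mem_cons.1 hx with h | h
          · omega
          · exact h1 x h
        · rw [Multiset.sum_cons, h2]; omega
    rw [if_pos hrs,
      ncard_split _ _ _ hsplit hdisj (SM_finite _ _)
        (himg ▸ ((SM_finite r (s-r)).image _)),
      himg, Set.ncard_image_of_injOn (fun a _ b _ h => (Multiset.cons_inj_right r).1 h)]
  · have hempty : {l | l ∈ SM r s ∧ r ∈ l} = ∅ := by
      ext l
      simp only [Set.mem_setOf_eq, Set.mem_empty_iff_false, iff_false, not_and, SM]
      rintro ⟨h1, h2⟩ hm
      have := Multiset.single_le_sum (fun x _ => Nat.zero_le x) r hm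
      omega
    rw [if_neg hrs,
      ncard_split _ _ _ hsplit hdisj (SM_finite _ _) (hempty ▸ Set.finite_empty),
      hempty, Set.ncard_empty]

/-- Surgery: peel the parts equal to `r` in the second component of `SP`. -/
lemma SP_rec (m k r W : ℕ) (hr : 1 ≤ r) :
    (SP m k r W).ncard = (SP m k (r-1) W).ncard +
      (if r ≤ W then (SP m k r (W-r)).ncard else 0) := by
  classical
  have hsplit : SP m k r W = SP m k (r-1) W ∪ {p | p ∈ SP m k r W ∧ r ∈ p.2} := by
    ext p
    simp only [SP, Set.mem_setOf_eq, Set.mem_union]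
    constructor
    · rintro ⟨h1, h2, h3, h4⟩
      by_cases hm : r ∈ p.2
      · exact Or.inr ⟨⟨h1, h2, h3, h4⟩, hm⟩
      · refine Or.inl ⟨h1, h2, fun x hx => ⟨(h3 x hx).1, ?_⟩, h4⟩
        have hx2 := (h3 x hx).2
        have hxr : x ≠ r := fun h => hm (h ▸ hx)
        omega
    · rintro (⟨h1, h2, h3, h4⟩ | ⟨⟨h1, h2, h3, h4⟩, _⟩)
      · exact ⟨h1, h2, fun x hx => ⟨(h3 x hx).1, by have := (h3 x hx).2; omega⟩, h4⟩
      · exact ⟨h1, h2, h3, h4⟩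
  have hdisj : Disjoint (SP m k (r-1) W) {p | p ∈ SP m k r W ∧ r ∈ p.2} := by
    rw [Set.disjoint_left]
    rintro p ⟨_, _, h3, _⟩ ⟨_, hm⟩
    have := (h3 r hm).2
    omega
  by_cases hrW : r ≤ W
  · have himg : {p | p ∈ SP m k r W ∧ r ∈ p.2} =
        (fun q : Multiset ℕ × Multiset ℕ => (q.1, r ::ₘ q.2)) '' SP m k r (W - r) := by
      ext p
      simp only [Set.mem_setOf_eq, Set.mem_image, SP]
      constructor
      · rintro ⟨⟨h1, h2, h3, h4⟩, hm⟩
        refine ⟨(p.1, p.2.erase r), ⟨h1, h2,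
          fun x hx => h3 x (Multiset.mem_of_mem_erase hx), ?_⟩, ?_⟩
        · have hc : r ::ₘ p.2.erase r = p.2 := Multiset.cons_erase hm
          have hs2 : (r ::ₘ p.2.erase r).sum = p.2.sum := by rw [hc]
          rw [Multiset.sum_cons] at hs2
          show p.1.sum + (p.2.erase r).sum = W - r
          omega
        · exact Prod.ext rfl (Multiset.cons_erase hm)
      · rintro ⟨⟨l, ν⟩, ⟨h1, h2, h3, h4⟩, rfl⟩
        dsimp only at h1 h2 h3 h4 ⊢
        refine ⟨⟨h1, h2, ?_, ?_⟩, Multiset.mem_cons_self r ν⟩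
        · intro x hx
          rcases Multiset.mem_cons.1 hx with h | h
          · omega
          · exact h3 x h
        · simp only [Multiset.sum_cons]
          omega
    have hinj : Set.InjOn (fun q : Multiset ℕ × Multiset ℕ => (q.1, r ::ₘ q.2))
        (SP m k r (W-r)) := by
      rintro ⟨a, b⟩ _ ⟨c, d⟩ _ h
      simp only [Prod.mk.injEq] at h
      exact Prod.ext h.1 ((Multiset.cons_inj_right r).1 h.2)
    rw [if_pos hrW,
      ncard_split _ _ _ hsplit hdisj (SP_finite _ _ _ _)
        (himg ▸ ((SP_finite m k r (W-r)).image _)),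
      himg, Set.ncard_image_of_injOn hinj]
  · have hempty : {p | p ∈ SP m k r W ∧ r ∈ p.2} = ∅ := by
      ext p
      simp only [Set.mem_setOf_eq, Set.mem_empty_iff_false, iff_false, not_and, SP]
      rintro ⟨h1, h2, h3, h4⟩ hm
      have := Multiset.single_le_sum (fun x _ => Nat.zero_le x) r hm
      omega
    rw [if_neg hrW,
      ncard_split _ _ _ hsplit hdisj (SP_finite _ _ _ _) (hempty ▸ Set.finite_empty),
      hempty, Set.ncard_empty]

lemma sum_map_add (ν : Multiset ℕ) (k : ℕ) :
    (ν.map (· + k)).sum = ν.sum + Multiset.card ν * k := by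
  induction ν using Multiset.induction_on with
  | empty => simp
  | cons a s ih =>
    simp only [Multiset.map_cons, Multiset.sum_cons, ih, Multiset.card_cons]
    ring

/-- SF is empty when the sum is too small. -/
lemma SF_empty (m k s : ℕ) (h : s < k * m) : SF m k s = ∅ := by
  ext l
  simp only [SF, Set.mem_setOf_eq, Set.mem_empty_iff_false, iff_false]
  rintro ⟨h1, h2, h3⟩
  have hle := Multiset.card_nsmul_le_sum (fun x hx => (h1 x hx).1)
  rw [smul_eq_mul, h2, h3, Nat.mul_comm] at hle
  omega

/-- Pad surgery: partitions with exactly `m` parts `≥ k` correspond to partitions with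
at most `m` parts (subtract `k` from every part). -/
lemma SF_pad (m k s : ℕ) (hk : 1 ≤ k) (hs : k * m ≤ s) :
    (SF m k s).ncard = (SD m (s - k * m)).ncard := by
  classical
  set g : Multiset ℕ → Multiset ℕ :=
    fun ν => ν.map (· + k) + Multiset.replicate (m - Multiset.card ν) k with hg
  have key : ∀ ν ∈ SD m (s - k * m), ∀ x ∈ g ν, k ≤ x ∧ 1 ≤ x := by
    rintro ν ⟨h1, h2, h3⟩ x hx
    rcases Multiset.mem_add.1 hx with h | h
    · obtain ⟨y, hy, rfl⟩ := Multiset.mem_map.1 h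
      omega
    · have := Multiset.eq_of_mem_replicate h
      omega
  have hcard : ∀ ν ∈ SD m (s - k * m), Multiset.card (g ν) = m := by
    rintro ν ⟨h1, h2, h3⟩
    simp only [hg, Multiset.card_add, Multiset.card_map, Multiset.card_replicate]
    omega
  have hsum : ∀ ν ∈ SD m (s - k * m), (g ν).sum = s := by
    rintro ν ⟨h1, h2, h3⟩
    simp only [hg, Multiset.sum_add, sum_map_add, Multiset.sum_replicate, smul_eq_mul, h3]
    rw [add_assoc, ← Nat.add_mul]
    have hc : Multiset.card ν + (m - Multiset.card ν) = m := by omega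
    rw [hc, Nat.mul_comm m k, Nat.sub_add_cancel hs]
  have himg : SF m k s = g '' SD m (s - k * m) := by
    ext l
    constructor
    · rintro ⟨h1, h2, h3⟩
      set ν : Multiset ℕ := (l.filter (fun x => k < x)).map (· - k) with hν
      have hsplit : l.filter (fun x => k < x) + l.filter (fun x => ¬ k < x) = l :=
        Multiset.filter_add_not _ l
      have hrep : l.filter (fun x => ¬ k < x) =
          Multiset.replicate (Multiset.card (l.filter (fun x => ¬ k < x))) k := by
        rw [Multiset.eq_replicate]
        refine ⟨rfl, fun b hb => ?_⟩
        have hbl := Multiset.mem_of_mem_filter hb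
        have hble := (Multiset.of_mem_filter hb)
        have := (h1 b hbl).1
        omega
      have hmapback : ν.map (· + k) = l.filter (fun x => k < x) := by
        rw [hν, Multiset.map_map]
        refine Eq.trans (Multiset.map_congr rfl ?_) (Multiset.map_id _)
        intro x hx
        have := Multiset.of_mem_filter hx
        simp only [Function.comp_apply, id_eq]
        omega
      have hcardν : Multiset.card ν + Multiset.card (l.filter (fun x => ¬ k < x)) = m := by
        have := congrArg Multiset.card hsplit
        simp only [Multiset.card_add] at this
        simp only [hν, Multiset.card_map]
        omega
      have hν_mem : ν ∈ SD m (s - k * m) := by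
        refine ⟨?_, ?_, ?_⟩
        · intro x hx
          obtain ⟨y, hy, rfl⟩ := Multiset.mem_map.1 hx
          have := Multiset.of_mem_filter hy
          omega
        · omega
        · -- sum: from l = map(+k) ν + replicate c k
          have hls : (ν.map (· + k)).sum +
              (Multiset.replicate (Multiset.card (l.filter (fun x => ¬ k < x))) k).sum
              = l.sum := by
            rw [← Multiset.sum_add, hmapback, ← hrep, hsplit]
          rw [sum_map_add, Multiset.sum_replicate, smul_eq_mul, h3] at hls
          have h2' : Multiset.card ν * k + Multiset.card (l.filter (fun x => ¬ k < x)) * k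
              = m * k := by rw [← Nat.add_mul]; congr 1
          have hkm : m * k = k * m := Nat.mul_comm m k
          omega
      refine ⟨ν, hν_mem, ?_⟩
      rw [hg]
      simp only
      rw [hmapback]
      have : m - Multiset.card ν = Multiset.card (l.filter (fun x => ¬ k < x)) := by omega
      rw [this, ← hrep, hsplit]
    · rintro ⟨ν, hν, rfl⟩
      exact ⟨key ν hν, hcard ν hν, hsum ν hν⟩
  have hinj : Set.InjOn g (SD m (s - k * m)) := by
    rintro ν hν ν' hν' h
    have hback : ∀ μ ∈ SD m (s - k * m),
        ((g μ).filter (fun x => k < x)).map (· - k) = μ := by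
      rintro μ ⟨h1, h2, h3⟩
      rw [hg]
      simp only [Multiset.filter_add]
      have e1 : (μ.map (· + k)).filter (fun x => k < x) = μ.map (· + k) := by
        rw [Multiset.filter_eq_self]
        intro x hx
        obtain ⟨y, hy, rfl⟩ := Multiset.mem_map.1 hx
        have := h1 y hy
        omega
      have e2 : (Multiset.replicate (m - Multiset.card μ) k).filter (fun x => k < x) = 0 := by
        rw [Multiset.filter_eq_nil]
        intro x hx
        have := Multiset.eq_of_mem_replicate hx
        omega
      rw [e1, e2, add_zero, Multiset.map_map]
      refine Eq.trans (Multiset.map_congr rfl ?_) (Multiset.map_id _)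
      intro x _
      simp only [Function.comp_apply, id_eq]
      omega
    rw [← hback ν hν, ← hback ν' hν', h]
  rw [himg, Set.ncard_image_of_injOn hinj]

/-- decompose `SD`: fewer than `m` parts, or exactly `m` parts. -/
lemma SD_rec (m t : ℕ) (hm : 1 ≤ m) :
    (SD m t).ncard = (SD (m-1) t).ncard + (if m ≤ t then (SD m (t-m)).ncard else 0) := by
  classical
  have hsplit : SD m t = SD (m-1) t ∪ SF m 1 t := by
    ext l
    simp only [SD, SF, Set.mem_setOf_eq, Set.mem_union]
    constructor
    · rintro ⟨h1, h2, h3⟩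
      rcases Nat.lt_or_ge (Multiset.card l) m with h | h
      · exact Or.inl ⟨h1, by omega, h3⟩
      · exact Or.inr ⟨fun x hx => ⟨h1 x hx, h1 x hx⟩, by omega, h3⟩
    · rintro (⟨h1, h2, h3⟩ | ⟨h1, h2, h3⟩)
      · exact ⟨h1, by omega, h3⟩
      · exact ⟨fun x hx => (h1 x hx).1, by omega, h3⟩
  have hdisj : Disjoint (SD (m-1) t) (SF m 1 t) := by
    rw [Set.disjoint_left]
    rintro l ⟨_, h2, _⟩ ⟨_, h2', _⟩
    omega
  rw [ncard_split _ _ _ hsplit hdisj (SD_finite _ _) (SF_finite _ _ _)]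
  congr 1
  by_cases hmt : m ≤ t
  · rw [if_pos hmt, SF_pad m 1 t le_rfl (by omega)]
    simp only [one_mul]
  · rw [if_neg hmt, SF_empty m 1 t (by omega)]
    simp [Set.ncard_empty]

/-- split `SF` according to whether a part equal to `2k` occurs. -/
lemma SF_split (m k s : ℕ) (hk : 1 ≤ k) :
    (SF m k s).ncard = (SL m k s).ncard +
      (if 2*k ≤ s ∧ 1 ≤ m then (SF (m-1) k (s-2*k)).ncard else 0) := by
  classical
  have hsplit : SF m k s = SL m k s ∪ {l | l ∈ SF m k s ∧ 2*k ∈ l} := by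
    ext l
    simp only [SF, SL, Set.mem_setOf_eq, Set.mem_union]
    constructor
    · rintro ⟨h1, h2, h3⟩
      by_cases hm : 2*k ∈ l
      · exact Or.inr ⟨⟨h1, h2, h3⟩, hm⟩
      · refine Or.inl ⟨fun x hx => ⟨(h1 x hx).1, (h1 x hx).2, fun h => hm (h ▸ hx)⟩, h2, h3⟩
    · rintro (⟨h1, h2, h3⟩ | ⟨⟨h1, h2, h3⟩, _⟩)
      · exact ⟨fun x hx => ⟨(h1 x hx).1, (h1 x hx).2.1⟩, h2, h3⟩
      · exact ⟨h1, h2, h3⟩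
  have hdisj : Disjoint (SL m k s) {l | l ∈ SF m k s ∧ 2*k ∈ l} := by
    rw [Set.disjoint_left]
    rintro l ⟨h1, _, _⟩ ⟨_, hm⟩
    exact (h1 _ hm).2.2 rfl
  by_cases hcond : 2*k ≤ s ∧ 1 ≤ m
  · have himg : {l | l ∈ SF m k s ∧ 2*k ∈ l} =
        (fun ν => (2*k) ::ₘ ν) '' SF (m-1) k (s - 2*k) := by
      ext l
      simp only [Set.mem_setOf_eq, Set.mem_image, SF]
      constructor
      · rintro ⟨⟨h1, h2, h3⟩, hm⟩
        refine ⟨l.erase (2*k), ⟨fun x hx => h1 x (Multiset.mem_of_mem_erase hx), ?_, ?_⟩,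
          Multiset.cons_erase hm⟩
        · have := congrArg Multiset.card (Multiset.cons_erase hm)
          simp only [Multiset.card_cons] at this
          omega
        · have := congrArg Multiset.sum (Multiset.cons_erase hm)
          rw [Multiset.sum_cons] at this
          omega
      · rintro ⟨ν, ⟨h1, h2, h3⟩, rfl⟩
        refine ⟨⟨?_, ?_, ?_⟩, Multiset.mem_cons_self _ ν⟩
        · intro x hx
          rcases Multiset.mem_cons.1 hx with h | h
          · omega
          · exact h1 x h
        · simp only [Multiset.card_cons]; omega
        · rw [Multiset.sum_cons, h3]; omega
    rw [if_pos hcond,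
      ncard_split _ _ _ hsplit hdisj (SL_finite _ _ _)
        (himg ▸ ((SF_finite (m-1) k (s-2*k)).image _)),
      himg, Set.ncard_image_of_injOn (fun a _ b _ h => (Multiset.cons_inj_right _).1 h)]
  · have hempty : {l | l ∈ SF m k s ∧ 2*k ∈ l} = ∅ := by
      ext l
      simp only [Set.mem_setOf_eq, Set.mem_empty_iff_false, iff_false, not_and, SF]
      rintro ⟨h1, h2, h3⟩ hm
      have hle := Multiset.single_le_sum (fun x _ => Nat.zero_le x) _ hm
      have hc : 1 ≤ Multiset.card l := by
        rcases Multiset.exists_cons_of_mem hm with ⟨u, rfl⟩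
        simp
      omega
    rw [if_neg hcond,
      ncard_split _ _ _ hsplit hdisj (SL_finite _ _ _) (hempty ▸ Set.finite_empty),
      hempty, Set.ncard_empty]

/-- base of the pair family: empty second component. -/
lemma SP_base (m k W : ℕ) : (SP m k 0 W).ncard = (SL m k W).ncard := by
  classical
  have himg : SP m k 0 W = (fun l => (l, (0 : Multiset ℕ))) '' SL m k W := by
    ext p
    simp only [SP, SL, Set.mem_setOf_eq, Set.mem_image]
    constructor
    · rintro ⟨h1, h2, h3, h4⟩
      have hp2 : p.2 = 0 := by
        rw [Multiset.eq_zero_iff_forall_notMem]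
        intro x hx
        have := h3 x hx
        omega
      refine ⟨p.1, ⟨h1, h2, ?_⟩, ?_⟩
      · rw [hp2] at h4; simpa using h4
      · rw [← hp2]
    · rintro ⟨l, ⟨h1, h2, h3⟩, rfl⟩
      exact ⟨h1, h2, by simp, by simpa using h3⟩
  rw [himg, Set.ncard_image_of_injOn (fun a _ b _ h => by simpa using congrArg Prod.fst h)]

noncomputable def Mser (r : ℕ) : PowerSeries ℤ :=
  PowerSeries.mk fun s => (SM r s).ncard

noncomputable def Lser : ℕ → ℕ → PowerSeries ℤ
  | 0, _ => 1
  | (m+1), k => X^(k*(m+1)) * Mser (m+1) - X^(k*(m+1)+k) * Mser m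

lemma coeff_Mser (r s : ℕ) : (PowerSeries.coeff (R := ℤ) s) (Mser r) = (SM r s).ncard :=
  PowerSeries.coeff_mk _ _

lemma Mser_zero : Mser 0 = 1 := by
  ext s
  rw [coeff_Mser, PowerSeries.coeff_one]
  split_ifs with h
  · subst h
    have : SM 0 0 = {(0 : Multiset ℕ)} := by
      ext l
      simp only [SM, Set.mem_setOf_eq, Set.mem_singleton_iff]
      constructor
      · rintro ⟨h1, h2⟩
        rw [Multiset.eq_zero_iff_forall_notMem]
        intro x hx
        have := h1 x hx
        omega
      · rintro rfl
        exact ⟨by simp, by simp⟩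
    rw [this, Set.ncard_singleton]
    norm_num
  · have : SM 0 s = ∅ := by
      ext l
      simp only [SM, Set.mem_setOf_eq, Set.mem_empty_iff_false, iff_false]
      rintro ⟨h1, h2⟩
      have hl : l = 0 := by
        rw [Multiset.eq_zero_iff_forall_notMem]
        intro x hx
        have := h1 x hx
        omega
      rw [hl] at h2
      simp at h2
      omega
    rw [this, Set.ncard_empty]
    norm_num

/-- the key algebraic relation for `Mser`. -/
lemma Mser_rel (r : ℕ) : (1 - X^(r+1)) * Mser (r+1) = Mser r := by
  have key : Mser (r+1) = Mser r + X^(r+1) * Mser (r+1) := by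
    ext s
    rw [map_add, coeff_Mser, coeff_Mser, PowerSeries.coeff_X_pow_mul', coeff_Mser]
    have := SM_rec (r+1) s (by omega)
    simp only [Nat.add_sub_cancel] at this
    rw [this]
    push_cast
    split_ifs <;> ring
  linear_combination key

/-- bridge: `SD` counts are the coefficients of `Mser`. -/
lemma SD_bridge (m t : ℕ) : ((SD m t).ncard : ℤ) = (PowerSeries.coeff (R := ℤ) t) (Mser m) := by
  induction m generalizing t with
  | zero =>
    rw [Mser_zero, PowerSeries.coeff_one]
    have : SD 0 t = SM 0 t := by
      ext l
      simp only [SD, SM, Set.mem_setOf_eq]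
      constructor
      · rintro ⟨h1, h2, h3⟩
        have hl : l = 0 := by
          rw [← Multiset.card_eq_zero]; omega
        subst hl
        exact ⟨by simp, h3⟩
      · rintro ⟨h1, h2⟩
        have hl : l = 0 := by
          rw [Multiset.eq_zero_iff_forall_notMem]
          intro x hx
          have := h1 x hx
          omega
        subst hl
        exact ⟨by simp, by simp, h2⟩
    rw [this]
    by_cases h : t = 0
    · subst h
      have : SM 0 0 = {(0 : Multiset ℕ)} := by
        ext l
        simp only [SM, Set.mem_setOf_eq, Set.mem_singleton_iff]
        constructor
        · rintro ⟨h1, h2⟩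
          rw [Multiset.eq_zero_iff_forall_notMem]
          intro x hx
          have := h1 x hx
          omega
        · rintro rfl
          exact ⟨by simp, by simp⟩
      rw [this, Set.ncard_singleton, if_pos rfl]
      norm_num
    · have : SM 0 t = ∅ := by
        ext l
        simp only [SM, Set.mem_setOf_eq, Set.mem_empty_iff_false, iff_false]
        rintro ⟨h1, h2⟩
        have hl : l = 0 := by
          rw [Multiset.eq_zero_iff_forall_notMem]
          intro x hx
          have := h1 x hx
          omega
        rw [hl] at h2
        simp at h2
        omega
      rw [this, Set.ncard_empty, if_neg h]
      norm_num
  | succ m ih =>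
    induction t using Nat.strong_induction_on with
    | _ t iht =>
      have hrec := SD_rec (m+1) t (by omega)
      simp only [Nat.add_sub_cancel] at hrec
      have hser : Mser (m+1) = Mser m + X^(m+1) * Mser (m+1) := by
        linear_combination Mser_rel m
      have hcast : ((SD (m+1) t).ncard : ℤ) = ((SD m t).ncard : ℤ) +
          (if m+1 ≤ t then ((SD (m+1) (t-(m+1))).ncard : ℤ) else 0) := by
        rw [hrec]; push_cast; split_ifs <;> ring
      rw [hcast, ih t]
      conv_rhs => rw [hser]
      rw [map_add, PowerSeries.coeff_X_pow_mul']
      congr 1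
      split_ifs with h
      · exact iht _ (by omega)
      · rfl

/-- `SF` cards via `SD`. -/
lemma SF_card (m k s : ℕ) (hk : 1 ≤ k) :
    ((SF m k s).ncard : ℤ) =
      if k * m ≤ s then ((SD m (s - k * m)).ncard : ℤ) else 0 := by
  split_ifs with h
  · rw [SF_pad m k s hk h]
  · rw [SF_empty m k s (by omega), Set.ncard_empty]
    norm_num

/-- bridge: `SL` counts are the coefficients of `Lser`. -/
lemma coeff_Lser (m k s : ℕ) :
    (PowerSeries.coeff (R := ℤ) s) (Lser m k) = ((SL m k s).ncard : ℤ) := by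
  rcases m with _ | m
  · -- m = 0
    have : SL 0 k s = if s = 0 then {(0:Multiset ℕ)} else ∅ := by
      split_ifs with h
      · subst h
        ext l
        simp only [SL, Set.mem_setOf_eq, Set.mem_singleton_iff]
        constructor
        · rintro ⟨h1, h2, h3⟩
          rw [← Multiset.card_eq_zero]; omega
        · rintro rfl
          exact ⟨by simp, by simp, by simp⟩
      · ext l
        simp only [SL, Set.mem_setOf_eq, Set.mem_empty_iff_false, iff_false]
        rintro ⟨h1, h2, h3⟩
        have hl : l = 0 := by rw [← Multiset.card_eq_zero]; omega
        rw [hl] at h3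
        simp at h3
        omega
    rw [this]
    show (PowerSeries.coeff (R := ℤ) s) 1 = _
    rw [PowerSeries.coeff_one]
    split_ifs with h
    · rw [Set.ncard_singleton]; norm_num
    · rw [Set.ncard_empty]; norm_num
  · -- m+1
    rcases Nat.eq_zero_or_pos k with hk0 | hk1
    · -- k = 0
      subst hk0
      have hEq : SL (m+1) 0 s = SF (m+1) 1 s := by
        ext l
        simp only [SL, SF, Set.mem_setOf_eq]
        constructor
        · rintro ⟨h1, h2, h3⟩
          exact ⟨fun x hx => ⟨(h1 x hx).2.1, (h1 x hx).2.1⟩, h2, h3⟩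
        · rintro ⟨h1, h2, h3⟩
          exact ⟨fun x hx => ⟨by omega, (h1 x hx).2, by have := (h1 x hx).2; omega⟩, h2, h3⟩
      rw [hEq]
      show (PowerSeries.coeff (R := ℤ) s) (X^(0*(m+1)) * Mser (m+1) - X^(0*(m+1)+0) * Mser m) = _
      simp only [Nat.zero_mul, Nat.zero_add, Nat.add_zero, pow_zero, one_mul]
      rw [map_sub, SF_card (m+1) 1 s le_rfl, one_mul]
      have hrel : Mser (m+1) = Mser m + X^(m+1) * Mser (m+1) := by
        linear_combination Mser_rel m
      conv_lhs => rw [hrel]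
      rw [map_add, PowerSeries.coeff_X_pow_mul']
      have h1 : ∀ t, (PowerSeries.coeff (R := ℤ) t) (Mser (m+1)) = ((SD (m+1) t).ncard : ℤ) :=
        fun t => (SD_bridge (m+1) t).symm
      split_ifs with h
      · rw [h1]; ring
      · ring
    · -- k ≥ 1
      show (PowerSeries.coeff (R := ℤ) s) (X^(k*(m+1)) * Mser (m+1) - X^(k*(m+1)+k) * Mser m) = _
      rw [map_sub, PowerSeries.coeff_X_pow_mul', PowerSeries.coeff_X_pow_mul']
      have hsplit := SF_split (m+1) k s hk1
      simp only [Nat.add_sub_cancel, show (1:ℕ) ≤ m+1 from by omega, and_true] at hsplit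
      have hcast : ((SF (m+1) k s).ncard : ℤ) = ((SL (m+1) k s).ncard : ℤ) +
          (if 2*k ≤ s then ((SF m k (s-2*k)).ncard : ℤ) else 0) := by
        rw [hsplit]; push_cast; split_ifs <;> ring
      have e1 := SF_card (m+1) k s hk1
      have e2 := SF_card m k (s-2*k) hk1
      have hSL : ((SL (m+1) k s).ncard : ℤ) =
          (if k*(m+1) ≤ s then ((SD (m+1) (s-k*(m+1))).ncard : ℤ) else 0) -
          (if k*(m+1)+k ≤ s then ((SD m (s-(k*(m+1)+k))).ncard : ℤ) else 0) := by
      -- combine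
        have hmul : k*(m+1) = k*m+k := by ring
        have hguard : (2*k ≤ s ∧ k*m ≤ s-2*k) ↔ k*(m+1)+k ≤ s := by
          constructor
          · rintro ⟨ha, hb⟩; omega
          · intro hc
            constructor
            · omega
            · omega
        by_cases hg : k*(m+1)+k ≤ s
        · have hg1 : 2*k ≤ s := by omega
          have hg2 : k*m ≤ s-2*k := by omega
          rw [if_pos hg] at *
          rw [if_pos hg1] at hcast
          rw [if_pos hg2] at e2
          have harg : s - 2*k - k*m = s - (k*(m+1)+k) := by omega
          rw [harg] at e2
          rw [e2] at hcast
          rw [e1] at hcast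
          split_ifs at hcast ⊢ with h2
          · linarith [hcast]
          · linarith [hcast]
        · rw [if_neg hg]
          have h2 : ¬ (2*k ≤ s) ∨ (2*k ≤ s ∧ ¬ (k*m ≤ s - 2*k)) := by
            by_cases hq : 2*k ≤ s
            · right; exact ⟨hq, fun hcon => hg (by omega)⟩
            · left; exact hq
          rcases h2 with h2 | ⟨h2a, h2b⟩
          · rw [if_neg h2] at hcast
            rw [e1] at hcast
            split_ifs at hcast ⊢ with h3
            · linarith [hcast]
            · linarith [hcast]
          · rw [if_pos h2a] at hcast
            rw [if_neg h2b] at e2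
            rw [e2] at hcast
            rw [e1] at hcast
            split_ifs at hcast ⊢ with h3
            · linarith [hcast]
            · linarith [hcast]
      rw [hSL]
      congr 1
      · split_ifs with h
        · rw [SD_bridge]
        · rfl
      · split_ifs with h
        · rw [show s - (k*(m+1)+k) = s - (k*(m+1)) - k from by omega] at *
          rw [SD_bridge]
        · rfl

/-- the main pair bridge. -/
lemma SP_bridge (m k : ℕ) : ∀ W r, ((SP m k r W).ncard : ℤ) =
    (PowerSeries.coeff (R := ℤ) W) (Lser m k * Mser r) := by
  intro W
  induction W using Nat.strong_induction_on with
  | _ W ihW =>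
    intro r
    induction r with
    | zero =>
      rw [Mser_zero, mul_one, coeff_Lser]
      exact_mod_cast SP_base m k W
    | succ r ihr =>
      have hrec := SP_rec m k (r+1) W (by omega)
      simp only [Nat.add_sub_cancel] at hrec
      have hser : Lser m k * Mser (r+1) =
          Lser m k * Mser r + X^(r+1) * (Lser m k * Mser (r+1)) := by
        have h := Mser_rel r
        calc Lser m k * Mser (r+1)
            = Lser m k * ((1 - X^(r+1)) * Mser (r+1)) + X^(r+1) * (Lser m k * Mser (r+1)) := by
              ring
          _ = _ := by rw [h]
      conv_rhs => rw [hser]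
      rw [map_add, PowerSeries.coeff_X_pow_mul', hrec]
      push_cast
      rw [ihr]
      congr 1
      split_ifs with h
      · rw [ihW (W - (r+1)) (by omega) (r+1)]
      · rfl

lemma Lser_zero (k : ℕ) : Lser 0 k = 1 := rfl

lemma Lser_succ (m k : ℕ) :
    Lser (m+1) k = X^(k*(m+1)) * Mser (m+1) - X^(k*(m+1)+k) * Mser m := rfl

lemma prod_id (k : ℕ) : (k+1)*(5*(k+1)-1) = k*(5*k-1) + (10*k+4) := by
  cases k with
  | zero => rfl
  | succ j =>
    have e1 : 5*(j+1+1)-1 = 5*j+9 := by omega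
    have e2 : 5*(j+1)-1 = 5*j+4 := by omega
    rw [e1, e2]
    ring

lemma beta_two (k : ℕ) : 2 * (k*(5*k-1)/2) = k*(5*k-1) := by
  rcases Nat.even_or_odd k with ⟨j, hj⟩ | ⟨j, hj⟩
  · have h2 : 2 ∣ k := ⟨j, by omega⟩
    rw [Nat.mul_div_cancel' (h2.mul_right _)]
  · have h5 : 5*k-1 = 2*(5*j+2) := by omega
    have h2 : 2 ∣ k*(5*k-1) := by
      rw [h5]
      exact Dvd.dvd.mul_left ⟨5*j+2, rfl⟩ k
    rw [Nat.mul_div_cancel' h2]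

lemma beta_succ (k : ℕ) : (k+1)*(5*(k+1)-1)/2 = k*(5*k-1)/2 + (5*k+2) := by
  have b1 := beta_two k
  have b2 := beta_two (k+1)
  have key := prod_id k
  omega

noncomputable def Aser (n k : ℕ) : PowerSeries ℤ :=
  if 2*k ≤ n then X^(k*(5*k-1)/2) * (Lser (n-2*k) k * Mser k) else 0

noncomputable def Hser (n k : ℕ) : PowerSeries ℤ :=
  if 1 ≤ k ∧ 2*k ≤ n then
    X^(k*(5*k-1)/2 + k*(n-2*k)) * ((1 + X^(n-k)) * (Mser (k-1) * Mser (n-2*k)))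
  else 0

/-- The per-`k` telescoping identity. -/
lemma perk (n k : ℕ) (hn : 1 ≤ n) :
    (1 - X^n) * Aser n k =
      X^(2*n-1) * Aser (n-1) k + Hser n k + Hser n (k+1) := by
  by_cases hkn : 2*k ≤ n
  · rcases Nat.eq_zero_or_pos k with rfl | hk1
    · -- k = 0
      rcases Nat.lt_or_ge n 2 with hn2 | hn2
      · -- n = 1
        have hn1 : n = 1 := by omega
        subst hn1
        rw [Aser, if_pos (by omega), Aser, if_pos (by omega),
          Hser, if_neg (by omega), Hser, if_neg (by omega)]
        norm_num [Lser_succ, Lser_zero, Mser_zero]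
        have r := Mser_rel 0
        rw [Mser_zero] at r
        linear_combination r
      · -- n ≥ 2
        obtain ⟨m, rfl⟩ : ∃ m, n = m + 2 := ⟨n - 2, by omega⟩
        rw [Aser, if_pos (by omega), Aser, if_pos (by omega),
          Hser, if_neg (by omega), Hser, if_pos (by omega)]
        rw [show m + 2 - 2*0 = (m+1)+1 from by omega,
          show m + 2 - 1 - 2*0 = m+1 from by omega,
          show 2*(m+2)-1 = 2*m+3 from by omega,
          show m+2-1 = m+1 from by omega,
          show m+2-2*1 = m from by omega,
          show (1:ℕ)*(5*1-1)/2 + 1*m = m+2 from by omega,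
          show (1:ℕ)-1 = 0 from rfl,
          Lser_succ, Lser_succ]
        rw [Mser_zero]
        have R1 := Mser_rel (m+1)
        have R2 := Mser_rel m
        rw [← R2, ← R1]
        norm_num
        ring
    · -- k ≥ 1
      obtain ⟨k', rfl⟩ : ∃ k', k = k' + 1 := ⟨k - 1, by omega⟩
      obtain ⟨m, rfl⟩ : ∃ m, n = m + 2*(k'+1) := ⟨n - 2*(k'+1), by omega⟩
      rcases Nat.lt_or_ge m 2 with hm2 | hm2
      · rcases Nat.eq_zero_or_pos m with rfl | hm1
        · -- m = 0
          rw [Aser, if_pos (by omega), Aser, if_neg (by omega),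
            Hser, if_pos (by omega), Hser, if_neg (by omega)]
          rw [show 0 + 2*(k'+1) - 2*(k'+1) = 0 from by omega,
            show 0 + 2*(k'+1) - (k'+1) = k'+1 from by omega,
            Lser_zero, Mser_zero,
            show k'+1-1 = k' from by omega]
          have R3 := Mser_rel k'
          rw [← R3]
          ring
        · -- m = 1
          have hm : m = 1 := by omega
          subst hm
          rw [Aser, if_pos (by omega), Aser, if_pos (by omega),
            Hser, if_pos (by omega), Hser, if_neg (by omega)]
          rw [show 1 + 2*(k'+1) - 2*(k'+1) = 0+1 from by omega,
            show 1 + 2*(k'+1) - 1 - 2*(k'+1) = 0 from by omega,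
            show 2*(1+2*(k'+1))-1 = 4*k'+5 from by omega,
            show 1 + 2*(k'+1) - (k'+1) = k'+2 from by omega,
            show k'+1-1 = k' from by omega,
            Lser_succ, Lser_zero, Mser_zero]
          have R1 := Mser_rel 0
          rw [Mser_zero] at R1
          have R3 := Mser_rel k'
          rw [← R3]
          norm_num
          linear_combination (X^((k'+1)*(5*(k'+1)-1)/2) * X^(2*k'+2) * Mser (k'+1)) * R1
      · -- m ≥ 2
        obtain ⟨m'', rfl⟩ : ∃ m'', m = m'' + 2 := ⟨m - 2, by omega⟩
        rw [Aser, if_pos (by omega), Aser, if_pos (by omega),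
          Hser, if_pos (by omega), Hser, if_pos (by omega)]
        rw [show m''+2 + 2*(k'+1) - 2*(k'+1) = (m''+1)+1 from by omega,
          show m''+2 + 2*(k'+1) - 1 - 2*(k'+1) = m''+1 from by omega,
          show 2*(m''+2+2*(k'+1))-1 = 2*m''+4*k'+7 from by omega,
          show m''+2+2*(k'+1) - (k'+1) = m''+k'+3 from by omega,
          show m''+2+2*(k'+1) - (k'+2) = m''+k'+2 from by omega,
          show m''+2+2*(k'+1) - 2*(k'+2) = m'' from by omega,
          show k'+1-1 = k' from by omega,
          show k'+2-1 = k'+1 from by omega,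
          Lser_succ, Lser_succ,
          beta_succ (k'+1)]
        have R1 := Mser_rel (m''+1)
        have R2 := Mser_rel m''
        have R3 := Mser_rel k'
        rw [← R2, ← R1, ← R3]
        ring
  · -- 2k > n
    rw [Aser, if_neg hkn, Aser, if_neg (by omega), Hser, if_neg (by omega),
      Hser, if_neg (by omega)]
    ring

lemma telescope (h : ℕ → PowerSeries ℤ) (R : ℕ) :
    ∑ k ∈ Finset.range R, (-1:ℤ⟦X⟧)^k * (h k + h (k+1)) =
      h 0 + (-1)^(R+1) * h R := by
  induction R with
  | zero => rw [Finset.range_zero, Finset.sum_empty]; ring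
  | succ R ih => rw [Finset.sum_range_succ, ih]; ring

lemma main_series (n : ℕ) (hn : 1 ≤ n) :
    (∑ k ∈ Finset.range (n+1), (-1:ℤ⟦X⟧)^k * Aser n k) =
      X^n * (∑ k ∈ Finset.range (n+1), (-1:ℤ⟦X⟧)^k * Aser n k) +
      X^(2*n-1) * (∑ k ∈ Finset.range (n+1), (-1:ℤ⟦X⟧)^k * Aser (n-1) k) := by
  have hz : Hser n 0 = 0 := by
    unfold Hser
    rw [if_neg (by omega)]
  have hz2 : Hser n (n+1) = 0 := by
    unfold Hser
    rw [if_neg (by omega)]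
  have key : (1 - X^n) * (∑ k ∈ Finset.range (n+1), (-1:ℤ⟦X⟧)^k * Aser n k) =
      X^(2*n-1) * (∑ k ∈ Finset.range (n+1), (-1:ℤ⟦X⟧)^k * Aser (n-1) k) := by
    rw [Finset.mul_sum]
    have step : ∀ k, (1 - X^n) * ((-1:ℤ⟦X⟧)^k * Aser n k) =
        X^(2*n-1) * ((-1:ℤ⟦X⟧)^k * Aser (n-1) k) +
        (-1:ℤ⟦X⟧)^k * (Hser n k + Hser n (k+1)) := by
      intro k
      linear_combination ((-1:ℤ⟦X⟧)^k) * perk n k hn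
    rw [Finset.sum_congr rfl (fun k _ => step k), Finset.sum_add_distrib,
      telescope (Hser n) (n+1), hz, hz2, ← Finset.mul_sum]
    ring
  linear_combination key

/-- coefficients of `Aser` count the theorem's sets. -/
lemma coeff_Aser (n k N : ℕ) :
    (PowerSeries.coeff (R := ℤ) N) (Aser n k) =
      (Nat.card {p | p ∈ _root_.P n k ∧ wt k p = N} : ℤ) := by
  by_cases hkn : 2*k ≤ n
  · unfold Aser
    rw [if_pos hkn, PowerSeries.coeff_X_pow_mul']
    split_ifs with hβ
    · rw [← SP_bridge (n-2*k) k (N - k*(5*k-1)/2) k]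
      rw [Nat.card_coe_set_eq]
      congr 1
      congr 1
      ext p
      simp only [SP, Set.mem_setOf_eq, _root_.P, wt]
      constructor
      · rintro ⟨h1, h2, h3, h4⟩
        exact ⟨⟨by omega, h1, h3⟩, by omega⟩
      · rintro ⟨⟨h1, h2, h3⟩, h4⟩
        exact ⟨h2, by omega, h3, by omega⟩
    · have hempty : {p | p ∈ _root_.P n k ∧ wt k p = N} = ∅ := by
        ext p
        simp only [Set.mem_setOf_eq, Set.mem_empty_iff_false, iff_false, _root_.P, wt]
        rintro ⟨⟨h1, h2, h3⟩, h4⟩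
        omega
      rw [hempty]
      simp
  · unfold Aser
    rw [if_neg hkn]
    have hempty : {p | p ∈ _root_.P n k ∧ wt k p = N} = ∅ := by
      ext p
      simp only [Set.mem_setOf_eq, Set.mem_empty_iff_false, iff_false, _root_.P, wt]
      rintro ⟨⟨h1, h2, h3⟩, h4⟩
      omega
    rw [hempty]
    simp

lemma card_empty_of_big (n k N : ℕ) (hkn : ¬ (2*k ≤ n)) (g : ℕ) :
    (Nat.card {p | p ∈ _root_.P n k ∧ wt k p + g = N} : ℤ) = 0 := by
  have hempty : {p | p ∈ _root_.P n k ∧ wt k p + g = N} = ∅ := by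
    ext p
    simp only [Set.mem_setOf_eq, Set.mem_empty_iff_false, iff_false, _root_.P]
    rintro ⟨⟨h1, h2, h3⟩, h4⟩
    omega
  rw [hempty]
  simp

lemma coeff_shift_Aser (n k N g : ℕ) (hg : 1 ≤ g) :
    (PowerSeries.coeff (R := ℤ) N) (X^g * Aser n k) =
      (Nat.card {p | p ∈ _root_.P n k ∧ wt k p + g = N} : ℤ) := by
  rw [PowerSeries.coeff_X_pow_mul']
  split_ifs with h
  · rw [coeff_Aser n k (N - g)]
    congr 1
    rw [Nat.card_coe_set_eq, Nat.card_coe_set_eq]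
    congr 1
    ext p
    simp only [Set.mem_setOf_eq]
    constructor
    · rintro ⟨h1, h2⟩
      exact ⟨h1, by omega⟩
    · rintro ⟨h1, h2⟩
      exact ⟨h1, by omega⟩
  · have hempty : {p | p ∈ _root_.P n k ∧ wt k p + g = N} = ∅ := by
      ext p
      simp only [Set.mem_setOf_eq, Set.mem_empty_iff_false, iff_false]
      rintro ⟨h1, h2⟩
      omega
    rw [hempty]
    simp

end WatsonAux

open WatsonAux

/-- Recurrence derived from combinatorial telescoping for Watson's identity. -/
theorem watson_recurrence (n N : ℕ) (hn : 1 ≤ n) :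
    ∑' k : ℕ, ((-1 : ℤ) ^ k * Nat.card {p | p ∈ P n k ∧ wt k p = N}) =
      (∑' k : ℕ, ((-1 : ℤ) ^ k * Nat.card {p | p ∈ P n k ∧ wt k p + n = N})) +
      ∑' k : ℕ, ((-1 : ℤ) ^ k *
        Nat.card {p | p ∈ P (n - 1) k ∧ wt k p + (2 * n - 1) = N}) := by
  classical
  have hC : ∀ (g : PowerSeries ℤ) (k : ℕ),
      (PowerSeries.coeff (R := ℤ) N) ((-1:PowerSeries ℤ)^k * g) =
        (-1:ℤ)^k * (PowerSeries.coeff (R := ℤ) N) g := by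
    intro g k
    have h : ((-1:PowerSeries ℤ))^k = PowerSeries.C ((-1:ℤ)^k) := by
      rw [map_pow, map_neg, map_one]
    rw [h, PowerSeries.coeff_C_mul]
  have z1 : ∀ k ∉ Finset.range (n+1),
      ((-1 : ℤ) ^ k * Nat.card {p | p ∈ P n k ∧ wt k p = N}) = 0 := by
    intro k hk
    rw [Finset.mem_range, not_lt] at hk
    have hc : (Nat.card {p | p ∈ P n k ∧ wt k p = N} : ℤ) = 0 := by
      rw [← coeff_Aser n k N]
      unfold Aser
      rw [if_neg (by omega)]
      simp
    rw [hc, mul_zero]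
  have z2 : ∀ k ∉ Finset.range (n+1),
      ((-1 : ℤ) ^ k * Nat.card {p | p ∈ P n k ∧ wt k p + n = N}) = 0 := by
    intro k hk
    rw [Finset.mem_range, not_lt] at hk
    rw [card_empty_of_big n k N (by omega) n, mul_zero]
  have z3 : ∀ k ∉ Finset.range (n+1),
      ((-1 : ℤ) ^ k * Nat.card {p | p ∈ P (n-1) k ∧ wt k p + (2*n-1) = N}) = 0 := by
    intro k hk
    rw [Finset.mem_range, not_lt] at hk
    rw [card_empty_of_big (n-1) k N (by omega) (2*n-1), mul_zero]
  rw [tsum_eq_sum z1, tsum_eq_sum z2, tsum_eq_sum z3]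
  have main' : (∑ k ∈ Finset.range (n+1), (-1:PowerSeries ℤ)^k * Aser n k) =
      (∑ k ∈ Finset.range (n+1), (-1:PowerSeries ℤ)^k * (X^n * Aser n k)) +
      (∑ k ∈ Finset.range (n+1), (-1:PowerSeries ℤ)^k * (X^(2*n-1) * Aser (n-1) k)) := by
    rw [main_series n hn, Finset.mul_sum, Finset.mul_sum]
    congr 1
    · exact Finset.sum_congr rfl (fun k _ => by ring)
    · exact Finset.sum_congr rfl (fun k _ => by ring)
  calc ∑ k ∈ Finset.range (n+1), ((-1 : ℤ) ^ k * Nat.card {p | p ∈ P n k ∧ wt k p = N})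
      = ∑ k ∈ Finset.range (n+1),
          (PowerSeries.coeff (R := ℤ) N) ((-1:PowerSeries ℤ)^k * Aser n k) :=
        Finset.sum_congr rfl (fun k _ => by rw [hC, coeff_Aser])
    _ = (PowerSeries.coeff (R := ℤ) N)
          (∑ k ∈ Finset.range (n+1), (-1:PowerSeries ℤ)^k * Aser n k) :=
        (map_sum _ _ _).symm
    _ = (PowerSeries.coeff (R := ℤ) N)
          ((∑ k ∈ Finset.range (n+1), (-1:PowerSeries ℤ)^k * (X^n * Aser n k)) +
           (∑ k ∈ Finset.range (n+1), (-1:PowerSeries ℤ)^k * (X^(2*n-1) * Aser (n-1) k))) := by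
        rw [← main']
    _ = (∑ k ∈ Finset.range (n+1),
          (PowerSeries.coeff (R := ℤ) N) ((-1:PowerSeries ℤ)^k * (X^n * Aser n k))) +
        (∑ k ∈ Finset.range (n+1),
          (PowerSeries.coeff (R := ℤ) N) ((-1:PowerSeries ℤ)^k * (X^(2*n-1) * Aser (n-1) k))) := by
        rw [map_add, map_sum, map_sum]
    _ = (∑ k ∈ Finset.range (n+1),
          ((-1 : ℤ) ^ k * Nat.card {p | p ∈ P n k ∧ wt k p + n = N})) +
        (∑ k ∈ Finset.range (n+1),
          ((-1 : ℤ) ^ k * Nat.card {p | p ∈ P (n-1) k ∧ wt k p + (2*n-1) = N})) := by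
        congr 1
        · exact Finset.sum_congr rfl
            (fun k _ => by rw [hC, coeff_shift_Aser n k N n hn])
        · exact Finset.sum_congr rfl
            (fun k _ => by rw [hC, coeff_shift_Aser (n-1) k N (2*n-1) (by omega)])
end

section
/- Closed form from the recurrence: Let n ≥ 0 be an integer and N a nonnegative integer, and write p_{n,k}(N) for the number of elements of P_{n,k} of weight N. Then ∑_{k=0}^∞ (−1)^k p_{n,k}(N) equals the number of partitions of N − n² into at most n parts (and equals 0 if N < n²). -/
open PowerSeries

namespace Watson

/-! ### Finiteness of multiset sets -/

lemma finite_msets (m T : ℕ) : {l : Multiset ℕ | Multiset.card l ≤ m ∧ l.sum ≤ T}.Finite := by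
  induction m with
  | zero =>
    apply Set.Finite.subset (Set.finite_singleton (0 : Multiset ℕ))
    rintro l ⟨hc, -⟩
    simp only [Nat.le_zero, Multiset.card_eq_zero] at hc
    simp [hc]
  | succ m ih =>
    apply Set.Finite.subset (Set.Finite.insert (0 : Multiset ℕ)
      (((Set.finite_Iic T).prod ih).image (fun q : ℕ × Multiset ℕ => q.1 ::ₘ q.2)))
    rintro l ⟨hc, hs⟩
    rcases Multiset.empty_or_exists_mem l with h0 | ⟨x, hx⟩
    · simp [h0]
    · right
      have hce := Multiset.cons_erase hx
      have hcard : Multiset.card l = Multiset.card (l.erase x) + 1 := by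
        rw [← hce]; simp [Multiset.card_cons]
      have hsum : l.sum = x + (l.erase x).sum := by
        rw [← hce]; simp
      refine ⟨⟨x, l.erase x⟩, ⟨?_, ?_, ?_⟩, hce⟩
      · simp only [Set.mem_Iic]; omega
      · dsimp only; omega
      · dsimp only; omega

lemma card_le_sum_of_pos {l : Multiset ℕ} (h : ∀ x ∈ l, 1 ≤ x) : Multiset.card l ≤ l.sum := by
  have := Multiset.card_nsmul_le_sum h
  simpa using this

/-! ### Counting functions -/

/-- number of multisets over ℕ with exactly `m` elements (zeros allowed) and sum `T` -/
noncomputable def eC (m T : ℕ) : ℕ :=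
  Nat.card {l : Multiset ℕ | Multiset.card l = m ∧ l.sum = T}

/-- number of multisets with elements in `[1,k]` and sum `M` -/
noncomputable def bC (k M : ℕ) : ℕ :=
  Nat.card {l : Multiset ℕ | (∀ x ∈ l, 1 ≤ x ∧ x ≤ k) ∧ l.sum = M}

/-- number of multisets with exactly `m` elements, none equal to `v`, sum `T` -/
noncomputable def wC (m v T : ℕ) : ℕ :=
  Nat.card {l : Multiset ℕ | Multiset.card l = m ∧ (∀ x ∈ l, x ≠ v) ∧ l.sum = T}

lemma finite_eC (m T : ℕ) : {l : Multiset ℕ | Multiset.card l = m ∧ l.sum = T}.Finite :=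
  (finite_msets m T).subset (by rintro l ⟨h1, h2⟩; exact ⟨le_of_eq h1, le_of_eq h2⟩)

lemma finite_bC (k M : ℕ) : {l : Multiset ℕ | (∀ x ∈ l, 1 ≤ x ∧ x ≤ k) ∧ l.sum = M}.Finite :=
  (finite_msets M M).subset (by
    rintro l ⟨h1, h2⟩
    exact ⟨le_trans (card_le_sum_of_pos (fun x hx => (h1 x hx).1)) (le_of_eq h2), le_of_eq h2⟩)

lemma finite_wC (m v T : ℕ) :
    {l : Multiset ℕ | Multiset.card l = m ∧ (∀ x ∈ l, x ≠ v) ∧ l.sum = T}.Finite :=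
  (finite_msets m T).subset (by rintro l ⟨h1, _, h2⟩; exact ⟨le_of_eq h1, le_of_eq h2⟩)

/-- splitting a finite set along a predicate -/
lemma ncard_split {α : Type*} (S : Set α) (p : α → Prop) (hS : S.Finite) :
    Nat.card S = Nat.card {x | x ∈ S ∧ p x} + Nat.card {x | x ∈ S ∧ ¬ p x} := by
  rw [Nat.card_coe_set_eq, Nat.card_coe_set_eq, Nat.card_coe_set_eq]
  have hu : S = {x | x ∈ S ∧ p x} ∪ {x | x ∈ S ∧ ¬ p x} := by
    ext x; by_cases hx : p x <;> simp [hx]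
  have hd : Disjoint {x | x ∈ S ∧ p x} {x | x ∈ S ∧ ¬ p x} := by
    rw [Set.disjoint_iff]
    rintro x ⟨⟨-, h1⟩, ⟨-, h2⟩⟩
    exact absurd h1 h2
  have h2 := Set.ncard_union_eq hd (hS.subset (fun x hx => hx.1)) (hS.subset (fun x hx => hx.1))
  rw [← hu] at h2
  exact h2

lemma ncard_image_eq {α β : Type*} (S : Set β) (f : β → α) (hf : Function.Injective f) :
    Nat.card (f '' S) = Nat.card S := by
  rw [Nat.card_coe_set_eq, Nat.card_coe_set_eq]
  exact Set.ncard_image_of_injective S hf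

-- [PASTE PART1 HERE when assembling]

lemma ncard_empty_set {α : Type*} {S : Set α} (h : S = ∅) : Nat.card S = 0 := by
  rw [Nat.card_coe_set_eq, h, Set.ncard_empty]

lemma mem_le_sum {l : Multiset ℕ} {x : ℕ} (h : x ∈ l) : x ≤ l.sum :=
  Multiset.single_le_sum (fun y _ => Nat.zero_le y) x h

lemma sum_map_succ (l : Multiset ℕ) :
    (Multiset.map (fun x => x + 1) l).sum = l.sum + Multiset.card l := by
  induction l using Multiset.induction with
  | empty => simp
  | cons a s ih => simp [ih]; ring


lemma eC_zero (T : ℕ) : eC 0 T = if T = 0 then 1 else 0 := by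
  unfold eC
  by_cases hT : T = 0
  · subst hT
    simp only [if_pos rfl]
    have : {l : Multiset ℕ | Multiset.card l = 0 ∧ l.sum = 0} = {0} := by
      ext l; simp [Multiset.card_eq_zero]
      rintro rfl; simp
    rw [this, Nat.card_coe_set_eq, Set.ncard_singleton]
    simp
  · rw [if_neg hT]
    apply ncard_empty_set
    ext l
    simp only [Set.mem_setOf_eq, Set.mem_empty_iff_false, iff_false, not_and]
    intro hc
    rw [Multiset.card_eq_zero] at hc
    subst hc
    simpa using Ne.symm hT

lemma eC_succ (m T : ℕ) :
    eC (m + 1) T = eC m T + (if m + 1 ≤ T then eC (m + 1) (T - (m + 1)) else 0) := by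
  unfold eC
  rw [ncard_split _ (fun l => (0 : ℕ) ∈ l) (finite_eC (m+1) T)]
  congr 1
  · -- contains 0 : cons-image of card-m sets
    have himg : {x : Multiset ℕ | x ∈ {l | Multiset.card l = m + 1 ∧ l.sum = T} ∧ (0:ℕ) ∈ x}
        = (fun t => (0:ℕ) ::ₘ t) '' {l | Multiset.card l = m ∧ l.sum = T} := by
      ext l
      constructor
      · rintro ⟨⟨hc, hs⟩, h0⟩
        refine ⟨l.erase 0, ⟨?_, ?_⟩, Multiset.cons_erase h0⟩
        · have := Multiset.card_erase_of_mem h0; rw [this, hc]; rfl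
        · have hce := Multiset.cons_erase h0
          have : l.sum = 0 + (l.erase 0).sum := by rw [← hce]; simp
          omega
      · rintro ⟨t, ⟨hc, hs⟩, rfl⟩
        refine ⟨⟨?_, ?_⟩, Multiset.mem_cons_self 0 t⟩
        · simp [hc]
        · simp [hs]
    rw [himg, ncard_image_eq _ _ (fun a b h => (Multiset.cons_inj_right 0).mp h)]
  · -- no 0 : map-(+1)-image
    by_cases hT : m + 1 ≤ T
    · rw [if_pos hT]
      have himg : {x : Multiset ℕ | x ∈ {l | Multiset.card l = m + 1 ∧ l.sum = T} ∧ ¬ (0:ℕ) ∈ x}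
          = (Multiset.map (fun x => x + 1)) '' {l | Multiset.card l = m + 1 ∧ l.sum = T - (m+1)} := by
        ext l
        constructor
        · rintro ⟨⟨hc, hs⟩, h0⟩
          have hpos : ∀ x ∈ l, 1 ≤ x := by
            intro x hx
            rcases Nat.eq_zero_or_pos x with rfl | h
            · exact absurd hx h0
            · exact h
          refine ⟨l.map (fun x => x - 1), ⟨?_, ?_⟩, ?_⟩
          · simp [hc]
          · have hmm : Multiset.map (fun x => x + 1) (Multiset.map (fun x => x - 1) l) = l := by
              rw [Multiset.map_map]
              have : ∀ x ∈ l, ((fun x => x + 1) ∘ fun x => x - 1) x = id x := by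
                intro x hx; have := hpos x hx; simp; omega
              rw [Multiset.map_congr rfl this, Multiset.map_id]
            have h2 := sum_map_succ (l.map (fun x => x - 1))
            rw [hmm] at h2
            simp only [Multiset.card_map, hc] at h2 ⊢
            omega
          · rw [Multiset.map_map]
            have : ∀ x ∈ l, ((fun x => x + 1) ∘ fun x => x - 1) x = id x := by
              intro x hx; have := hpos x hx; simp; omega
            rw [Multiset.map_congr rfl this, Multiset.map_id]
        · rintro ⟨t, ⟨hc, hs⟩, rfl⟩
          have h2 := sum_map_succ t
          refine ⟨⟨?_, ?_⟩, ?_⟩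
          · simp [hc]
          · rw [h2, hc, hs]; omega
          · simp
      rw [himg, ncard_image_eq _ _ (Multiset.map_injective (fun a b h => by omega))]
    · rw [if_neg hT]
      apply ncard_empty_set
      ext l
      simp only [Set.mem_setOf_eq, Set.mem_empty_iff_false, iff_false]
      rintro ⟨⟨hc, hs⟩, h0⟩
      have hpos : ∀ x ∈ l, 1 ≤ x := by
        intro x hx
        rcases Nat.eq_zero_or_pos x with rfl | h
        · exact absurd hx h0
        · exact h
      have := card_le_sum_of_pos hpos
      omega

lemma ncard_congr_set {α : Type*} {S S' : Set α} (h : S = S') : Nat.card S = Nat.card S' := by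
  rw [h]

lemma bC_zero (M : ℕ) : bC 0 M = if M = 0 then 1 else 0 := by
  unfold bC
  by_cases hM : M = 0
  · subst hM
    rw [if_pos rfl]
    have : {l : Multiset ℕ | (∀ x ∈ l, 1 ≤ x ∧ x ≤ 0) ∧ l.sum = 0} = {0} := by
      ext l
      simp only [Set.mem_setOf_eq, Set.mem_singleton_iff]
      constructor
      · rintro ⟨h1, h2⟩
        rcases Multiset.empty_or_exists_mem l with h | ⟨x, hx⟩
        · exact h
        · have := h1 x hx; omega
      · rintro rfl; simp
    rw [this, Nat.card_coe_set_eq, Set.ncard_singleton]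
  · rw [if_neg hM]
    apply ncard_empty_set
    ext l
    simp only [Set.mem_setOf_eq, Set.mem_empty_iff_false, iff_false]
    rintro ⟨h1, h2⟩
    rcases Multiset.empty_or_exists_mem l with h | ⟨x, hx⟩
    · subst h; simp at h2; exact hM h2.symm
    · have := h1 x hx; omega

lemma bC_succ (k M : ℕ) :
    bC (k + 1) M = bC k M + (if k + 1 ≤ M then bC (k + 1) (M - (k + 1)) else 0) := by
  unfold bC
  rw [ncard_split _ (fun l => ¬ ((k+1 : ℕ) ∈ l)) (finite_bC (k+1) M)]
  congr 1
  · -- does not contain k+1 : same as parts ≤ k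
    apply ncard_congr_set
    ext l
    simp only [Set.mem_setOf_eq]
    constructor
    · rintro ⟨⟨h1, h2⟩, h3⟩
      refine ⟨fun x hx => ⟨(h1 x hx).1, ?_⟩, h2⟩
      have := (h1 x hx).2
      rcases Nat.lt_or_ge x (k+1) with h | h
      · omega
      · have : x = k + 1 := by omega
        subst this; exact absurd hx h3
    · rintro ⟨h1, h2⟩
      refine ⟨⟨fun x hx => ⟨(h1 x hx).1, by have := (h1 x hx).2; omega⟩, h2⟩, ?_⟩
      intro hmem
      have := (h1 _ hmem).2; omega
  · -- contains k+1
    simp only [not_not]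
    by_cases hM : k + 1 ≤ M
    · rw [if_pos hM]
      have himg : {x : Multiset ℕ | x ∈ {l | (∀ y ∈ l, 1 ≤ y ∧ y ≤ k+1) ∧ l.sum = M} ∧ (k+1:ℕ) ∈ x}
          = (fun t => (k+1:ℕ) ::ₘ t) '' {l | (∀ y ∈ l, 1 ≤ y ∧ y ≤ k+1) ∧ l.sum = M - (k+1)} := by
        ext l
        constructor
        · rintro ⟨⟨h1, h2⟩, h3⟩
          have hce := Multiset.cons_erase h3
          refine ⟨l.erase (k+1), ⟨?_, ?_⟩, hce⟩
          · intro y hy; exact h1 y (Multiset.mem_of_mem_erase hy)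
          · have : l.sum = (k+1) + (l.erase (k+1)).sum := by rw [← hce]; simp
            omega
        · rintro ⟨t, ⟨h1, h2⟩, rfl⟩
          refine ⟨⟨?_, ?_⟩, Multiset.mem_cons_self _ t⟩
          · intro y hy
            rcases Multiset.mem_cons.mp hy with rfl | hy'
            · omega
            · exact h1 y hy'
          · simp [h2]; omega
      rw [himg, ncard_image_eq _ _ (fun a b h => (Multiset.cons_inj_right _).mp h)]
    · rw [if_neg hM]
      apply ncard_empty_set
      ext l
      simp only [Set.mem_setOf_eq, Set.mem_empty_iff_false, iff_false]
      rintro ⟨⟨h1, h2⟩, h3⟩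
      have := mem_le_sum h3
      omega

lemma bC_eq_eC : ∀ k M, bC k M = eC k M := by
  intro k
  induction k with
  | zero => intro M; rw [bC_zero, eC_zero]
  | succ k ih =>
    intro M
    induction M using Nat.strong_induction_on with
    | _ M ihM =>
      rw [bC_succ, eC_succ, ih M]
      congr 1
      by_cases h : k + 1 ≤ M
      · rw [if_pos h, if_pos h, ihM (M - (k+1)) (by omega)]
      · rw [if_neg h, if_neg h]

lemma wC_zero (v T : ℕ) : wC 0 v T = if T = 0 then 1 else 0 := by
  unfold wC
  by_cases hT : T = 0
  · subst hT
    rw [if_pos rfl]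
    have : {l : Multiset ℕ | Multiset.card l = 0 ∧ (∀ x ∈ l, x ≠ v) ∧ l.sum = 0} = {0} := by
      ext l
      simp only [Set.mem_setOf_eq, Set.mem_singleton_iff, Multiset.card_eq_zero]
      constructor
      · rintro ⟨h, -⟩; exact h
      · rintro rfl; simp
    rw [this, Nat.card_coe_set_eq, Set.ncard_singleton]
  · rw [if_neg hT]
    apply ncard_empty_set
    ext l
    simp only [Set.mem_setOf_eq, Set.mem_empty_iff_false, iff_false]
    rintro ⟨h1, -, h2⟩
    rw [Multiset.card_eq_zero] at h1
    subst h1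
    simp at h2
    exact hT h2.symm

/-- split of the all-multiset count by containing `v` -/
lemma eC_split (m v T : ℕ) :
    eC (m + 1) T = wC (m + 1) v T + (if v ≤ T then eC m (T - v) else 0) := by
  unfold eC wC
  rw [ncard_split _ (fun l => ¬ ((v : ℕ) ∈ l)) (finite_eC (m+1) T)]
  congr 1
  · apply ncard_congr_set
    ext l
    simp only [Set.mem_setOf_eq]
    constructor
    · rintro ⟨⟨h1, h2⟩, h3⟩
      exact ⟨h1, fun x hx => by rintro rfl; exact h3 hx, h2⟩
    · rintro ⟨h1, h2, h3⟩
      exact ⟨⟨h1, h3⟩, fun hmem => (h2 v hmem) rfl⟩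
  · simp only [not_not]
    by_cases hv : v ≤ T
    · rw [if_pos hv]
      have himg : {x : Multiset ℕ | x ∈ {l | Multiset.card l = m + 1 ∧ l.sum = T} ∧ (v:ℕ) ∈ x}
          = (fun t => (v:ℕ) ::ₘ t) '' {l | Multiset.card l = m ∧ l.sum = T - v} := by
        ext l
        constructor
        · rintro ⟨⟨h1, h2⟩, h3⟩
          have hce := Multiset.cons_erase h3
          refine ⟨l.erase v, ⟨?_, ?_⟩, hce⟩
          · have := Multiset.card_erase_of_mem h3; rw [this, h1]; rfl
          · have : l.sum = v + (l.erase v).sum := by rw [← hce]; simp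
            omega
        · rintro ⟨t, ⟨h1, h2⟩, rfl⟩
          refine ⟨⟨by simp [h1], ?_⟩, Multiset.mem_cons_self _ t⟩
          simp [h2]; omega
      rw [himg, ncard_image_eq _ _ (fun a b h => (Multiset.cons_inj_right _).mp h)]
    · rw [if_neg hv]
      apply ncard_empty_set
      ext l
      simp only [Set.mem_setOf_eq, Set.mem_empty_iff_false, iff_false]
      rintro ⟨⟨h1, h2⟩, h3⟩
      have := mem_le_sum h3
      omega

/-! ### Power series -/

noncomputable def CC (m : ℕ) : PowerSeries ℤ := PowerSeries.mk (fun T => (eC m T : ℤ))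

noncomputable def WW (m v : ℕ) : PowerSeries ℤ := PowerSeries.mk (fun T => (wC m v T : ℤ))

lemma coeff_Xpow_mul (f : PowerSeries ℤ) (e N : ℕ) :
    (coeff (R := ℤ) N) (X ^ e * f) = if e ≤ N then (coeff (R := ℤ) (N - e)) f else 0 := by
  by_cases h : e ≤ N
  · rw [if_pos h]
    conv_lhs => rw [show N = (N - e) + e by omega, PowerSeries.coeff_X_pow_mul]
  · rw [if_neg h, PowerSeries.coeff_mul]
    apply Finset.sum_eq_zero
    rintro ⟨i, j⟩ hij
    rw [Finset.HasAntidiagonal.mem_antidiagonal] at hij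
    rw [PowerSeries.coeff_X_pow]
    have : ¬ (i = e) := by omega
    rw [if_neg this, zero_mul]

lemma CC_zero : CC 0 = 1 := by
  apply PowerSeries.ext
  intro n
  rw [CC, PowerSeries.coeff_mk, eC_zero, PowerSeries.coeff_one]
  split <;> simp_all

lemma CC_rel (m : ℕ) : (1 - X ^ (m + 1)) * CC (m + 1) = CC m := by
  apply PowerSeries.ext
  intro n
  rw [sub_mul, one_mul, map_sub, coeff_Xpow_mul]
  simp only [CC, PowerSeries.coeff_mk]
  rw [eC_succ m n]
  by_cases h : m + 1 ≤ n
  · rw [if_pos h, if_pos h]; push_cast; ring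
  · rw [if_neg h, if_neg h]; push_cast; ring

lemma WW_zero (v : ℕ) : WW 0 v = 1 := by
  apply PowerSeries.ext
  intro n
  rw [WW, PowerSeries.coeff_mk, wC_zero, PowerSeries.coeff_one]
  split <;> simp_all

lemma WW_eq (m v : ℕ) : WW (m + 1) v = CC (m + 1) - X ^ v * CC m := by
  apply PowerSeries.ext
  intro n
  rw [map_sub, coeff_Xpow_mul]
  simp only [WW, CC, PowerSeries.coeff_mk]
  have h := eC_split m v n
  by_cases hv : v ≤ n
  · rw [if_pos hv] at h ⊢
    rw [h]; push_cast; ring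
  · rw [if_neg hv] at h ⊢
    rw [h]; push_cast; ring

/-! ### The series identity -/

def off (k : ℕ) : ℕ := k * (5 * k - 1) / 2

lemma off_succ (k : ℕ) : off (k + 1) = off k + (5 * k + 2) := by
  unfold off
  have h : (k+1) * (5*(k+1)-1) = k*(5*k-1) + (5*k+2)*2 := by
    cases k with
    | zero => decide
    | succ j =>
      have e1 : 5*(j+1+1)-1 = 5*j+9 := by omega
      have e2 : 5*(j+1)-1 = 5*j+4 := by omega
      rw [e1, e2]; ring
  rw [h, Nat.add_mul_div_right _ _ (by norm_num : (0:ℕ) < 2)]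

noncomputable def Tt (n k : ℕ) : PowerSeries ℤ :=
  X ^ (off k + k * (n - 2*k)) * WW (n - 2*k) k * CC k

noncomputable def Ee (n k : ℕ) : PowerSeries ℤ :=
  if k = 0 ∨ n < 2*k then 0
  else X ^ (off k + k * (n - 2*k)) * (1 + X ^ (n - k)) * CC (k-1) * CC (n - 2*k)

lemma step (n k : ℕ) (hn : 1 ≤ n) (hk : 2*k ≤ n) :
    (1 - X^n) * Tt n k - (if 2*k ≤ n - 1 then X^(2*n-1) * Tt (n-1) k else 0)
      = Ee n k + Ee n (k+1) := by
  rcases Nat.lt_or_ge n (2*k+2) with hsm | hbig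
  · rcases (by omega : n = 2*k ∨ n = 2*k+1) with rfl | rfl
    · -- case A : n = 2k, so k ≥ 1
      obtain ⟨j, rfl⟩ : ∃ j, k = j + 1 := ⟨k-1, by omega⟩
      rw [if_neg (by omega), show Ee (2*(j+1)) (j+1+1) = 0 from if_pos (by omega)]
      rw [Tt, Ee, if_neg (by omega)]
      simp only [show 2*(j+1) - 2*(j+1) = 0 from by omega,
        show 2*(j+1) - (j+1) = j+1 from by omega,
        show j+1-1 = j from rfl, Nat.mul_zero, WW_zero]
      have h3 := CC_rel j
      have h5 := CC_zero
      linear_combination (X ^ (off (j+1)) * (1 + X^(j+1)) * CC 0) * h3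
        - (X ^ (off (j+1)) * (1 - X^(2*(j+1))) * CC (j+1)) * h5
    · -- case B : n = 2k+1
      rw [if_pos (by omega), show Ee (2*k+1) (k+1) = 0 from if_pos (by omega)]
      rw [Tt, Tt]
      simp only [show 2*k+1 - 2*k = 1 from by omega, show 2*k+1-1 = 2*k from by omega,
        show 2*k - 2*k = 0 from by omega, show 2*(2*k+1)-1 = 4*k+1 from by omega,
        Nat.mul_zero, Nat.mul_one, WW_zero]
      rw [show WW 1 k = CC 1 - X^k * CC 0 from WW_eq 0 k]
      have h4 := CC_rel 0
      have h5 := CC_zero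
      rcases Nat.eq_zero_or_pos k with rfl | hkpos
      · rw [show Ee (2*0+1) 0 = 0 from if_pos (Or.inl rfl)]
        rw [CC_zero] at h4
        rw [CC_zero]
        linear_combination (X ^ (off 0)) * h4
      · obtain ⟨j, rfl⟩ : ∃ j, k = j + 1 := ⟨k-1, by omega⟩
        rw [Ee, if_neg (by omega)]
        simp only [show 2*(j+1)+1 - 2*(j+1) = 1 from by omega,
          show 2*(j+1)+1 - (j+1) = j+2 from by omega,
          show j+1-1 = j from rfl, Nat.mul_one]
        have h3 := CC_rel j
        linear_combination (X^(off (j+1)) * X^(2*(j+1)) * CC (j+1)) * h4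
          + (X^(off (j+1)) * X * X^(4*(j+1)) * CC (j+1)) * h5
          + (X^(off (j+1)) * X^(j+1) * (1 + X * X^(j+1)) * CC 1) * h3
  · -- case C : n ≥ 2k+2
    obtain ⟨b, rfl⟩ : ∃ b, n = b+2+2*k := ⟨n-2-2*k, by omega⟩
    rw [if_pos (by omega)]
    rw [Tt, Tt]
    simp only [show b+2+2*k - 2*k = b+2 from by omega,
      show b+2+2*k-1 = b+1+2*k from by omega,
      show b+1+2*k - 2*k = b+1 from by omega,
      show 2*(b+2+2*k)-1 = 2*b+4*k+3 from by omega]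
    rw [show WW (b+2) k = CC (b+2) - X^k * CC (b+1) from WW_eq (b+1) k,
        show WW (b+1) k = CC (b+1) - X^k * CC b from WW_eq b k]
    have h1 := CC_rel (b+1)
    have h2 := CC_rel b
    rcases Nat.eq_zero_or_pos k with rfl | hkpos
    · rw [show Ee (b+2+2*0) 0 = 0 from if_pos (Or.inl rfl)]
      rw [Ee, if_neg (by omega)]
      simp only [show b+2+2*0 - 2*1 = b from by omega,
        show b+2+2*0 - 1 = b+1 from by omega,
        show (1:ℕ)-1 = 0 from rfl]
      rw [show off 1 = off 0 + 2 from by simpa using off_succ 0]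
      rw [CC_zero]
      linear_combination (X^(off 0)) * h1 + (X^(off 0) * X^(b+2)) * h2
    · obtain ⟨j, rfl⟩ : ∃ j, k = j + 1 := ⟨k-1, by omega⟩
      rw [Ee, if_neg (by omega), Ee, if_neg (by omega)]
      simp only [show b+2+2*(j+1) - 2*(j+1) = b+2 from by omega,
        show b+2+2*(j+1) - (j+1) = b+j+3 from by omega,
        show b+2+2*(j+1) - 2*(j+1+1) = b from by omega,
        show b+2+2*(j+1) - (j+1+1) = b+j+2 from by omega,
        show j+1-1 = j from rfl, show j+1+1-1 = j+1 from rfl]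
      rw [off_succ (j+1)]
      have h3 := CC_rel j
      linear_combination (X^(off (j+1) + (j+1)*b) * X^(3*(j+1)) * CC (j+1)) * h1
        + (X^(off (j+1) + (j+1)*b + b + 2) * X^(5*(j+1)) * CC (j+1)) * h2
        + (X^(off (j+1) + (j+1)*b + 2*(j+1)) * (1 + X^(b+2+(j+1))) * CC (b+2)) * h3

noncomputable def Ss (n : ℕ) : PowerSeries ℤ :=
  ∑ k ∈ Finset.range (n/2+1), (-1 : PowerSeries ℤ)^k * Tt n k

lemma step_sum (n : ℕ) (hn : 1 ≤ n) : (1 - X^n) * Ss n = X^(2*n-1) * Ss (n-1) := by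
  have hr : Finset.range ((n-1)/2+1) = (Finset.range (n/2+1)).filter (fun k => 2*k ≤ n-1) := by
    ext k
    simp only [Finset.mem_range, Finset.mem_filter]
    omega
  have h2 : X^(2*n-1) * Ss (n-1)
      = ∑ k ∈ Finset.range (n/2+1),
          (-1 : PowerSeries ℤ)^k * (if 2*k ≤ n-1 then X^(2*n-1) * Tt (n-1) k else 0) := by
    rw [Ss, Finset.mul_sum]
    have : ∀ k, (-1 : PowerSeries ℤ)^k * (if 2*k ≤ n-1 then X^(2*n-1) * Tt (n-1) k else 0)
        = if 2*k ≤ n-1 then X^(2*n-1) * ((-1 : PowerSeries ℤ)^k * Tt (n-1) k) else 0 := by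
      intro k
      by_cases h : 2*k ≤ n-1
      · rw [if_pos h, if_pos h]; ring
      · rw [if_neg h, if_neg h, mul_zero]
    simp_rw [this]
    rw [← Finset.sum_filter, ← hr]
  have h3 : (1 - X^n) * Ss n - X^(2*n-1) * Ss (n-1)
      = ∑ k ∈ Finset.range (n/2+1), ((-1 : PowerSeries ℤ)^k *
          ((1 - X^n) * Tt n k - (if 2*k ≤ n-1 then X^(2*n-1) * Tt (n-1) k else 0))) := by
    rw [h2, Ss, Finset.mul_sum, ← Finset.sum_sub_distrib]
    apply Finset.sum_congr rfl
    intro k _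
    ring
  have h4 : (1 - X^n) * Ss n - X^(2*n-1) * Ss (n-1) = 0 := by
    rw [h3]
    have h5 : ∀ k ∈ Finset.range (n/2+1), ((-1 : PowerSeries ℤ)^k *
        ((1 - X^n) * Tt n k - (if 2*k ≤ n-1 then X^(2*n-1) * Tt (n-1) k else 0)))
        = ((-1 : PowerSeries ℤ)^k * Ee n k - (-1 : PowerSeries ℤ)^(k+1) * Ee n (k+1)) := by
      intro k hk
      rw [Finset.mem_range] at hk
      rw [step n k hn (by omega)]
      ring
    rw [Finset.sum_congr rfl h5, Finset.sum_range_sub' (fun k => (-1 : PowerSeries ℤ)^k * Ee n k)]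
    rw [show Ee n 0 = 0 from if_pos (Or.inl rfl),
        show Ee n (n/2+1) = 0 from if_pos (Or.inr (by omega))]
    ring
  exact sub_eq_zero.mp h4

lemma main_alg : ∀ n, Ss n = X^(n^2) * CC n := by
  intro n
  induction n with
  | zero =>
    rw [Ss, show (0:ℕ)/2+1 = 1 from rfl, Finset.range_one, Finset.sum_singleton]
    rw [Tt, show (0:ℕ) - 2*0 = 0 from rfl, WW_zero,
        show off 0 + 0 * (0 - 2*0) = 0 from by decide, show (0:ℕ)^2 = 0 from rfl]
    norm_num
  | succ n ih =>
    have hs := step_sum (n+1) (by omega)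
    rw [show n+1-1 = n from rfl, ih, ← CC_rel n,
        show 2*(n+1)-1 = 2*n+1 from by omega] at hs
    have hne : (1 - X^(n+1) : PowerSeries ℤ) ≠ 0 := by
      intro h
      have h0 := congrArg (PowerSeries.coeff (R := ℤ) 0) h
      simp [PowerSeries.coeff_one, PowerSeries.coeff_X_pow] at h0
    apply mul_left_cancel₀ hne
    rw [hs]
    have hexp : (n+1)^2 = n^2 + (2*n+1) := by ring
    rw [hexp, pow_add]
    ring

/-! ### Counting bridges -/

lemma nat_card_sigma {ι : Type*} [Fintype ι] (F : ι → Type*) [∀ i, Finite (F i)] :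
    Nat.card (Σ i, F i) = ∑ i, Nat.card (F i) := by
  classical
  letI : ∀ i, Fintype (F i) := fun i => Fintype.ofFinite _
  rw [Nat.card_eq_fintype_card, Fintype.card_sigma]
  exact Finset.sum_congr rfl fun i _ => (Nat.card_eq_fintype_card).symm

lemma sum_map_add_const (l : Multiset ℕ) (k : ℕ) :
    (Multiset.map (fun x => x + k) l).sum = l.sum + k * Multiset.card l := by
  induction l using Multiset.induction with
  | empty => simp
  | cons a s ih => simp [ih]; ring

lemma card_pairs (Ql Qm : Multiset ℕ → Prop) (M : ℕ)
    (hl : ∀ s, {l : Multiset ℕ | Ql l ∧ l.sum = s}.Finite)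
    (hm : ∀ s, {l : Multiset ℕ | Qm l ∧ l.sum = s}.Finite) :
    Nat.card {p : Multiset ℕ × Multiset ℕ | Ql p.1 ∧ Qm p.2 ∧ p.1.sum + p.2.sum = M}
      = ∑ ij ∈ Finset.HasAntidiagonal.antidiagonal M,
          Nat.card {l : Multiset ℕ | Ql l ∧ l.sum = ij.1} *
            Nat.card {l : Multiset ℕ | Qm l ∧ l.sum = ij.2} := by
  classical
  haveI inst1 : ∀ ij : {x : ℕ × ℕ // x ∈ Finset.HasAntidiagonal.antidiagonal M},
      Finite ({l : Multiset ℕ // Ql l ∧ l.sum = ij.1.1} × {l : Multiset ℕ // Qm l ∧ l.sum = ij.1.2}) := by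
    intro ij
    haveI f1 : Finite {l : Multiset ℕ // Ql l ∧ l.sum = ij.1.1} := (hl ij.1.1).to_subtype
    haveI f2 : Finite {l : Multiset ℕ // Qm l ∧ l.sum = ij.1.2} := (hm ij.1.2).to_subtype
    infer_instance
  have E : ({p : Multiset ℕ × Multiset ℕ | Ql p.1 ∧ Qm p.2 ∧ p.1.sum + p.2.sum = M} : Set _)
      ≃ Σ ij : {x : ℕ × ℕ // x ∈ Finset.HasAntidiagonal.antidiagonal M},
          ({l : Multiset ℕ // Ql l ∧ l.sum = ij.1.1} × {l : Multiset ℕ // Qm l ∧ l.sum = ij.1.2}) :=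
    { toFun := fun p => ⟨⟨(p.1.1.sum, p.1.2.sum), by
          rw [Finset.HasAntidiagonal.mem_antidiagonal]; exact p.2.2.2⟩,
        ⟨⟨p.1.1, p.2.1, rfl⟩, ⟨p.1.2, p.2.2.1, rfl⟩⟩⟩
      invFun := fun x => ⟨(x.2.1.1, x.2.2.1), x.2.1.2.1, x.2.2.2.1, by
          have h := x.1.2
          rw [Finset.HasAntidiagonal.mem_antidiagonal] at h
          rw [x.2.1.2.2, x.2.2.2.2]
          exact h⟩
      left_inv := by rintro ⟨⟨l, m⟩, h⟩; rfl
      right_inv := by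
        rintro ⟨⟨⟨i, j⟩, hij⟩, ⟨l, hQl, hls⟩, ⟨m, hQm, hms⟩⟩
        dsimp only at hls hms ⊢
        subst hls
        subst hms
        rfl }
  rw [Nat.card_congr E, nat_card_sigma]
  rw [← Finset.sum_attach (Finset.HasAntidiagonal.antidiagonal M)
    (fun ij => Nat.card {l : Multiset ℕ | Ql l ∧ l.sum = ij.1} *
      Nat.card {l : Multiset ℕ | Qm l ∧ l.sum = ij.2})]
  apply Finset.sum_congr rfl
  intro ij _
  rw [Nat.card_prod]
  rfl

lemma lam_count (m k i : ℕ) :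
    Nat.card {l : Multiset ℕ | (Multiset.card l = m ∧ ∀ x ∈ l, k ≤ x ∧ 1 ≤ x ∧ x ≠ 2*k) ∧ l.sum = i}
      = if k*m ≤ i then wC m k (i - k*m) else 0 := by
  by_cases hki : k*m ≤ i
  · rw [if_pos hki]
    have himg : {l : Multiset ℕ | (Multiset.card l = m ∧ ∀ x ∈ l, k ≤ x ∧ 1 ≤ x ∧ x ≠ 2*k) ∧ l.sum = i}
        = (Multiset.map (fun x => x + k)) ''
            {l : Multiset ℕ | Multiset.card l = m ∧ (∀ x ∈ l, x ≠ k) ∧ l.sum = i - k*m} := by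
      ext l
      constructor
      · rintro ⟨⟨hc, hcond⟩, hs⟩
        have hmm : Multiset.map (fun x => x + k) (Multiset.map (fun x => x - k) l) = l := by
          rw [Multiset.map_map]
          have : ∀ x ∈ l, ((fun x => x + k) ∘ fun x => x - k) x = id x := by
            intro x hx; have := hcond x hx; simp; omega
          rw [Multiset.map_congr rfl this, Multiset.map_id]
        refine ⟨l.map (fun x => x - k), ⟨?_, ?_, ?_⟩, hmm⟩
        · simp [hc]
        · intro y hy
          rw [Multiset.mem_map] at hy
          obtain ⟨x, hx, rfl⟩ := hy
          have := hcond x hx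
          omega
        · have h2 := sum_map_add_const (l.map (fun x => x - k)) k
          rw [hmm] at h2
          simp only [Multiset.card_map, hc] at h2
          omega
      · rintro ⟨t, ⟨hc, hcond, hs⟩, rfl⟩
        have h2 := sum_map_add_const t k
        refine ⟨⟨by simp [hc], ?_⟩, by rw [h2, hc, hs]; omega⟩
        intro y hy
        rw [Multiset.mem_map] at hy
        obtain ⟨x, hx, rfl⟩ := hy
        have := hcond x hx
        omega
    rw [himg, ncard_image_eq _ _ (Multiset.map_injective (fun a b h => by omega)), wC]
  · rw [if_neg hki]
    apply ncard_empty_set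
    ext l
    simp only [Set.mem_setOf_eq, Set.mem_empty_iff_false, iff_false]
    rintro ⟨⟨hc, hcond⟩, hs⟩
    have := Multiset.card_nsmul_le_sum (fun x hx => (hcond x hx).1)
    rw [smul_eq_mul, hc, Nat.mul_comm] at this
    omega

lemma coeff_lam (m k i : ℕ) :
    ((Nat.card {l : Multiset ℕ | (Multiset.card l = m ∧ ∀ x ∈ l, k ≤ x ∧ 1 ≤ x ∧ x ≠ 2*k) ∧ l.sum = i} : ℕ) : ℤ)
      = (coeff (R := ℤ) i) (X^(k*m) * WW m k) := by
  rw [lam_count, coeff_Xpow_mul]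
  by_cases h : k*m ≤ i
  · rw [if_pos h, if_pos h, WW, PowerSeries.coeff_mk]
  · rw [if_neg h, if_neg h]; simp

lemma coeff_mu (k j : ℕ) :
    ((Nat.card {l : Multiset ℕ | (∀ x ∈ l, 1 ≤ x ∧ x ≤ k) ∧ l.sum = j} : ℕ) : ℤ)
      = (coeff (R := ℤ) j) (CC k) := by
  rw [CC, PowerSeries.coeff_mk]
  have : Nat.card {l : Multiset ℕ | (∀ x ∈ l, 1 ≤ x ∧ x ≤ k) ∧ l.sum = j} = bC k j := rfl
  rw [this, bC_eq_eC]

lemma rhs_card (n M : ℕ) :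
    Nat.card {l : Multiset ℕ | (∀ x ∈ l, 0 < x) ∧ Multiset.card l ≤ n ∧ l.sum = M} = eC n M := by
  classical
  have himg : {l : Multiset ℕ | Multiset.card l = n ∧ l.sum = M}
      = (fun t : Multiset ℕ => t + Multiset.replicate (n - Multiset.card t) 0) ''
          {l : Multiset ℕ | (∀ x ∈ l, 0 < x) ∧ Multiset.card l ≤ n ∧ l.sum = M} := by
    ext l
    constructor
    · rintro ⟨hc, hs⟩
      set t := l.filter (fun x => 0 < x) with ht
      have hsplit : t + l.filter (fun x => ¬ 0 < x) = l := Multiset.filter_add_not _ l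
      have hzero : l.filter (fun x => ¬ 0 < x)
          = Multiset.replicate (Multiset.card (l.filter (fun x => ¬ 0 < x))) 0 := by
        rw [Multiset.eq_replicate_card]
        intro b hb
        rw [Multiset.mem_filter] at hb
        omega
      have hcard : Multiset.card t + Multiset.card (l.filter (fun x => ¬ 0 < x)) = n := by
        have := congrArg Multiset.card hsplit
        simpa [hc] using this
      refine ⟨t, ⟨?_, ?_, ?_⟩, ?_⟩
      · intro x hx; exact (Multiset.mem_filter.mp hx).2
      · omega
      · have := congrArg Multiset.sum hsplit
        rw [Multiset.sum_add, hzero, Multiset.sum_replicate, smul_zero, add_zero] at this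
        rw [this, hs]
      · show t + Multiset.replicate (n - Multiset.card t) 0 = l
        rw [show n - Multiset.card t = Multiset.card (l.filter (fun x => ¬ 0 < x)) from by omega]
        rw [← hzero]
        exact hsplit
    · rintro ⟨t, ⟨hpos, hcl, hsum⟩, rfl⟩
      constructor
      · rw [Multiset.card_add, Multiset.card_replicate]; omega
      · rw [Multiset.sum_add, Multiset.sum_replicate, smul_zero, add_zero, hsum]
  have hinj : Set.InjOn (fun t : Multiset ℕ => t + Multiset.replicate (n - Multiset.card t) 0)
      {l : Multiset ℕ | (∀ x ∈ l, 0 < x) ∧ Multiset.card l ≤ n ∧ l.sum = M} := by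
    rintro t1 ⟨h1, -, -⟩ t2 ⟨h2, -, -⟩ heq
    have key : ∀ t : Multiset ℕ, (∀ x ∈ t, 0 < x) →
        (t + Multiset.replicate (n - Multiset.card t) 0).filter (fun x => 0 < x) = t := by
      intro t ht
      rw [Multiset.filter_add]
      have e1 : t.filter (fun x => 0 < x) = t := Multiset.filter_eq_self.mpr ht
      have e2 : (Multiset.replicate (n - Multiset.card t) 0).filter (fun x => 0 < x) = 0 := by
        rw [Multiset.filter_eq_nil]
        intro b hb
        rw [Multiset.mem_replicate] at hb
        omega
      rw [e1, e2, add_zero]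
    have := congrArg (Multiset.filter (fun x => 0 < x)) heq
    rwa [key t1 h1, key t2 h2] at this
  rw [eC, himg, Nat.card_coe_set_eq, Nat.card_coe_set_eq,
    Set.ncard_image_of_injOn hinj]

lemma finite_lam_slice (m k : ℕ) : ∀ s,
    {l : Multiset ℕ | (Multiset.card l = m ∧ ∀ x ∈ l, k ≤ x ∧ 1 ≤ x ∧ x ≠ 2*k) ∧ l.sum = s}.Finite := by
  intro s
  exact (finite_msets m s).subset (by rintro l ⟨⟨h1, -⟩, h2⟩; exact ⟨le_of_eq h1, le_of_eq h2⟩)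

lemma finite_mu_slice (k : ℕ) : ∀ s,
    {l : Multiset ℕ | (∀ x ∈ l, 1 ≤ x ∧ x ≤ k) ∧ l.sum = s}.Finite := by
  intro s
  exact (finite_msets s s).subset (by
    rintro l ⟨h1, h2⟩
    exact ⟨le_trans (card_le_sum_of_pos (fun x hx => (h1 x hx).1)) (le_of_eq h2), le_of_eq h2⟩)

lemma P_card (n k N : ℕ) (h : 2*k ≤ n) :
    ((Nat.card {p : Multiset ℕ × Multiset ℕ | p ∈ P n k ∧ wt k p = N} : ℕ) : ℤ)
      = (coeff (R := ℤ) N) (Tt n k) := by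
  have hTt : Tt n k = X ^ (off k) * ((X ^ (k * (n - 2*k)) * WW (n - 2*k) k) * CC k) := by
    rw [Tt, pow_add]; ring
  rw [hTt, coeff_Xpow_mul]
  by_cases hoff : off k ≤ N
  · rw [if_pos hoff]
    have hset : {p : Multiset ℕ × Multiset ℕ | p ∈ P n k ∧ wt k p = N}
        = {p : Multiset ℕ × Multiset ℕ |
            (Multiset.card p.1 = n - 2*k ∧ ∀ x ∈ p.1, k ≤ x ∧ 1 ≤ x ∧ x ≠ 2*k) ∧
            (∀ x ∈ p.2, 1 ≤ x ∧ x ≤ k) ∧ p.1.sum + p.2.sum = N - off k} := by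
      ext p
      simp only [Set.mem_setOf_eq, P, wt]
      constructor
      · rintro ⟨⟨h1, h2, h3⟩, h4⟩
        have : k * (5*k-1) / 2 = off k := rfl
        refine ⟨⟨by omega, h2⟩, h3, by rw [← this]; omega⟩
      · rintro ⟨⟨h1, h2⟩, h3, h4⟩
        have : k * (5*k-1) / 2 = off k := rfl
        refine ⟨⟨by omega, h2, h3⟩, by rw [this]; omega⟩
    rw [ncard_congr_set hset]
    rw [card_pairs _ _ _ (finite_lam_slice (n-2*k) k) (finite_mu_slice k)]
    rw [PowerSeries.coeff_mul]
    push_cast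
    apply Finset.sum_congr rfl
    rintro ⟨i, j⟩ _
    rw [← coeff_lam (n-2*k) k i, ← coeff_mu k j]
  · rw [if_neg hoff]
    rw [ncard_empty_set (by
      ext p
      simp only [Set.mem_setOf_eq, Set.mem_empty_iff_false, iff_false, not_and]
      intro _
      rw [wt]
      have : k * (5*k-1) / 2 = off k := rfl
      omega)]
    simp
end Watson

open Watson PowerSeries in
/-- Closed form: the alternating count equals the number of partitions of `N - n²`
into at most `n` parts (and is `0` when `N < n²`). -/
theorem watson_closed_form (n N : ℕ) :
    ∑' k : ℕ, ((-1 : ℤ) ^ k * Nat.card {p | p ∈ P n k ∧ wt k p = N}) =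
      Nat.card {lam : Multiset ℕ |
        (∀ x ∈ lam, 0 < x) ∧ lam.card ≤ n ∧ lam.sum + n ^ 2 = N} := by
  classical
  have hsupp : ∀ k ∉ Finset.range (n/2+1),
      ((-1 : ℤ) ^ k * Nat.card {p | p ∈ P n k ∧ wt k p = N}) = 0 := by
    intro k hk
    rw [Finset.mem_range, not_lt] at hk
    have hempty : {p : Multiset ℕ × Multiset ℕ | p ∈ P n k ∧ wt k p = N} = ∅ := by
      ext p
      simp only [Set.mem_setOf_eq, Set.mem_empty_iff_false, iff_false, not_and]
      intro hP
      obtain ⟨h1, -, -⟩ := hP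
      omega
    rw [ncard_empty_set hempty]
    simp
  rw [tsum_eq_sum hsupp]
  have hterm : ∀ k ∈ Finset.range (n/2+1),
      ((-1 : ℤ)^k * Nat.card {p | p ∈ P n k ∧ wt k p = N})
        = (coeff (R := ℤ) N) ((-1 : PowerSeries ℤ)^k * Tt n k) := by
    intro k hk
    rw [Finset.mem_range] at hk
    rw [show ((-1 : PowerSeries ℤ))^k = PowerSeries.C (R := ℤ) ((-1)^k) from by
        rw [map_pow, map_neg, map_one],
      PowerSeries.coeff_C_mul, ← P_card n k N (by omega)]
  rw [Finset.sum_congr rfl hterm, ← map_sum (coeff (R := ℤ) N) _ (Finset.range (n/2+1))]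
  rw [show ∑ k ∈ Finset.range (n/2+1), (-1 : PowerSeries ℤ)^k * Tt n k = Ss n from rfl]
  rw [main_alg n, coeff_Xpow_mul]
  by_cases hn2 : n^2 ≤ N
  · rw [if_pos hn2]
    have hset : {lam : Multiset ℕ | (∀ x ∈ lam, 0 < x) ∧ Multiset.card lam ≤ n ∧ lam.sum + n^2 = N}
        = {lam : Multiset ℕ | (∀ x ∈ lam, 0 < x) ∧ Multiset.card lam ≤ n ∧ lam.sum = N - n^2} := by
      ext lam
      simp only [Set.mem_setOf_eq]
      constructor
      · rintro ⟨a, b, c⟩; exact ⟨a, b, by omega⟩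
      · rintro ⟨a, b, c⟩; exact ⟨a, b, by omega⟩
    rw [ncard_congr_set hset, rhs_card, CC, PowerSeries.coeff_mk]
  · rw [if_neg hn2]
    rw [ncard_empty_set (by
      ext lam
      simp only [Set.mem_setOf_eq, Set.mem_empty_iff_false, iff_false, not_and]
      intro _ _
      omega : {lam : Multiset ℕ | (∀ x ∈ lam, 0 < x) ∧ Multiset.card lam ≤ n ∧ lam.sum + n^2 = N} = ∅)]
    simp
end

section
/- q-Zeilberger certificate for Watson's identity: Let q, a be complex numbers with |q| < 1 and a q^j ≠ 1 for every integer j ≥ 0. For each integer k ≥ 0 define F_k(a) = (−1)^k (1 − a q^{2k}) a^{2k} q^{k(5k−1)/2} / ((q;q)_k · (a q^k;q)_∞), and for k ≥ 1 define H_k(a) = (−1)^k (−1 − q^k + a q^{2k}) a^{2k} q^{k(5k−1)/2} / ((q;q)_{k−1} · (a q^k;q)_∞), with H_0(a) = 0. Then for every integer k ≥ 0, F_k(a) − F_k(aq) − a q · F_k(a q²) = H_{k+1}(a) − H_k(a). -/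
set_option maxHeartbeats 1000000

/-- The finite q-Pochhammer symbol `(a; q)_k = ∏_{i=0}^{k-1} (1 - a q^i)`. -/
noncomputable def qPoch (q a : ℂ) (k : ℕ) : ℂ := ∏ i ∈ Finset.range k, (1 - a * q ^ i)

/-- The infinite q-Pochhammer symbol `(a; q)_∞ = ∏_{i=0}^{∞} (1 - a q^i)`. -/
noncomputable def qPochInf (q a : ℂ) : ℂ := ∏' i : ℕ, (1 - a * q ^ i)

/-- The summand `F_k(a)` of the Watson series. -/
noncomputable def F (q a : ℂ) (k : ℕ) : ℂ :=
  (-1) ^ k * (1 - a * q ^ (2 * k)) * a ^ (2 * k) * q ^ (k * (5 * k - 1) / 2) /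
    (qPoch q q k * qPochInf q (a * q ^ k))

/-- The certificate `H_k(a)`, with `H_0(a) = 0`. -/
noncomputable def H (q a : ℂ) (k : ℕ) : ℂ :=
  if k = 0 then 0
  else (-1) ^ k * (-1 - q ^ k + a * q ^ (2 * k)) * a ^ (2 * k) * q ^ (k * (5 * k - 1) / 2) /
    (qPoch q q (k - 1) * qPochInf q (a * q ^ k))

lemma multipliable_aux (q x : ℂ) (hq : ‖q‖ < 1) (hx : ∀ i : ℕ, x * q ^ i ≠ 1) :
    Multipliable fun i : ℕ ↦ (1 - x * q ^ i) := by
  have hfn : ∀ (u : Unit) (n : ℕ), (fun n (_ : Unit) ↦ ((1 : ℂ) - x * q ^ n)) n u ≠ 0 := by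
    intro u n
    simp only [sub_ne_zero]
    exact fun h => hx n h.symm
  have hsum : ∀ (_ : Unit), Summable fun n : ℕ ↦ Complex.log (1 - x * q ^ n) := by
    intro u
    have hgeo : Summable fun n : ℕ ↦ (3 / 2 * ‖x‖) * ‖q‖ ^ n :=
      (summable_geometric_of_lt_one (norm_nonneg q) hq).mul_left _
    apply Summable.of_norm_bounded_eventually_nat hgeo
    have htend : Filter.Tendsto (fun n : ℕ ↦ ‖x‖ * ‖q‖ ^ n) Filter.atTop (nhds 0) := by
      have := (tendsto_pow_atTop_nhds_zero_of_lt_one (norm_nonneg q) hq).const_mul ‖x‖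
      simpa using this
    have hev : ∀ᶠ n : ℕ in Filter.atTop, ‖x‖ * ‖q‖ ^ n ≤ 1 / 2 :=
      htend.eventually_le_const (by norm_num : (0 : ℝ) < 1 / 2)
    filter_upwards [hev] with n hn
    have h1 : (1 : ℂ) - x * q ^ n = 1 + (-(x * q ^ n)) := by ring
    have hnorm : ‖-(x * q ^ n)‖ = ‖x‖ * ‖q‖ ^ n := by
      rw [norm_neg, norm_mul, norm_pow]
    rw [h1]
    calc ‖Complex.log (1 + -(x * q ^ n))‖ ≤ 3 / 2 * ‖-(x * q ^ n)‖ :=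
          Complex.norm_log_one_add_half_le_self (by rw [hnorm]; exact hn)
      _ = 3 / 2 * ‖x‖ * ‖q‖ ^ n := by rw [hnorm]; ring
  exact Complex.multipliable_of_summable_log (hsum ())

lemma qPochInf_step (q x : ℂ) (hq : ‖q‖ < 1) (hx : ∀ i : ℕ, x * q ^ i ≠ 1) :
    qPochInf q x = (1 - x) * qPochInf q (x * q) := by
  have hx' : ∀ i : ℕ, (x * q) * q ^ i ≠ 1 := by
    intro i h
    exact hx (i + 1) (by rw [pow_succ]; linear_combination h)
  have hm : Multipliable fun n : ℕ ↦ (1 - x * q ^ (n + 1)) := by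
    apply (multipliable_aux q (x * q) hq hx').congr
    intro i; ring
  rw [qPochInf, tprod_eq_zero_mul' (f := fun i : ℕ => 1 - x * q ^ i) hm]
  simp only [pow_zero, mul_one, qPochInf]
  congr 1
  apply tprod_congr
  intro i
  ring_nf

lemma exp_shift (k : ℕ) : (k + 1) * (5 * (k + 1) - 1) / 2 = k * (5 * k - 1) / 2 + (5 * k + 2) := by
  have hmul : (k + 1) * (5 * (k + 1) - 1) = k * (5 * k - 1) + (5 * k + 2) * 2 := by
    cases k with
    | zero => decide
    | succ m =>
      have a1 : 5 * (m + 1 + 1) - 1 = 5 * m + 9 := by omega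
      have a2 : 5 * (m + 1) - 1 = 5 * m + 4 := by omega
      rw [a1, a2]; ring
  generalize hX : (k + 1) * (5 * (k + 1) - 1) = X at hmul ⊢
  generalize hY : k * (5 * k - 1) = Y at hmul ⊢
  omega

lemma frac5 (n1 n2 n3 n4 n5 d1 d2 d3 d4 d5 c1 c2 c3 c4 c5 D : ℂ)
    (e1 : d1 * c1 = D) (e2 : d2 * c2 = D) (e3 : d3 * c3 = D) (e4 : d4 * c4 = D)
    (e5 : d5 * c5 = D) (hD : D ≠ 0)
    (hnum : n1 * c1 - n2 * c2 - n3 * c3 = n4 * c4 - n5 * c5) :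
    n1 / d1 - n2 / d2 - n3 / d3 = n4 / d4 - n5 / d5 := by
  have hc : ∀ d c : ℂ, d * c = D → c ≠ 0 := by
    intro d c h hc0
    rw [hc0, mul_zero] at h
    exact hD h.symm
  have key : ∀ n d c : ℂ, d * c = D → n / d = n * c / D := by
    intro n d c h
    rw [← h, mul_div_mul_right n d (hc d c h)]
  rw [key n1 d1 c1 e1, key n2 d2 c2 e2, key n3 d3 c3 e3, key n4 d4 c4 e4, key n5 d5 c5 e5,
    div_sub_div_same, div_sub_div_same, div_sub_div_same]
  rw [hnum]

/-- q-Zeilberger certificate for Watson's identity. -/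
theorem watson_certificate (q a : ℂ) (hq : ‖q‖ < 1) (ha : ∀ j : ℕ, a * q ^ j ≠ 1) :
    ∀ k : ℕ, F q a k - F q (a * q) k - a * q * F q (a * q ^ 2) k =
      H q a (k + 1) - H q a k := by
  intro k
  -- basic nonvanishing facts
  have hq1 : ∀ j : ℕ, (1 : ℂ) - q ^ (j + 1) ≠ 0 := by
    intro j h
    have h1 : q ^ (j + 1) = 1 := by linear_combination -h
    have hn : ‖q ^ (j + 1)‖ < 1 := by
      rw [norm_pow]
      exact pow_lt_one₀ (norm_nonneg q) hq (Nat.succ_ne_zero j)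
    rw [h1] at hn; simp at hn
  have hQ : ∀ m : ℕ, qPoch q q m ≠ 0 := by
    intro m
    rw [qPoch]
    apply Finset.prod_ne_zero_iff.2
    intro i _
    have := hq1 i
    rw [pow_succ'] at this
    exact this
  have haq : ∀ j : ℕ, (1 : ℂ) - a * q ^ j ≠ 0 := by
    intro j h
    exact ha j (by linear_combination -h)
  -- peel-off identity
  have hpeel : ∀ m : ℕ, qPochInf q (a * q ^ m) =
      (1 - a * q ^ m) * qPochInf q (a * q ^ (m + 1)) := by
    intro m
    have hx : ∀ i : ℕ, (a * q ^ m) * q ^ i ≠ 1 := by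
      intro i h
      exact ha (m + i) (by rw [pow_add]; linear_combination h)
    have h := qPochInf_step q (a * q ^ m) hq hx
    rw [h, mul_assoc, ← pow_succ]
  have hP1 : qPochInf q (a * q ^ (k + 1)) =
      (1 - a * q ^ (k + 1)) * qPochInf q (a * q ^ (k + 2)) := hpeel (k + 1)
  have hP0 : qPochInf q (a * q ^ k) =
      (1 - a * q ^ k) * ((1 - a * q ^ (k + 1)) * qPochInf q (a * q ^ (k + 2))) := by
    rw [hpeel k, hP1]
  have harg1 : a * q * q ^ k = a * q ^ (k + 1) := by ring
  have harg2 : a * q ^ 2 * q ^ k = a * q ^ (k + 2) := by ring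
  have hQk := hQ k
  have h1 := haq k
  have h2 := haq (k + 1)
  have hexp := exp_shift k
  by_cases hTz : qPochInf q (a * q ^ (k + 2)) = 0
  · -- all terms vanish
    have hF1 : F q a k = 0 := by
      rw [F, hP0, hTz, mul_zero, mul_zero, mul_zero, div_zero]
    have hF2 : F q (a * q) k = 0 := by
      rw [F, harg1, hP1, hTz, mul_zero, mul_zero, div_zero]
    have hF3 : F q (a * q ^ 2) k = 0 := by
      rw [F, harg2, hTz, mul_zero, div_zero]
    have hH1 : H q a (k + 1) = 0 := by
      rw [H, if_neg (Nat.succ_ne_zero k)]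
      simp only [Nat.add_sub_cancel]
      rw [hP1, hTz, mul_zero, mul_zero, div_zero]
    have hH0 : H q a k = 0 := by
      rw [H]
      rcases Nat.eq_zero_or_pos k with h | h
      · simp [h]
      · rw [if_neg (Nat.pos_iff_ne_zero.1 h), hP0, hTz, mul_zero, mul_zero, mul_zero, div_zero]
    rw [hF1, hF2, hF3, hH1, hH0]; ring
  · -- main computation
    rcases Nat.eq_zero_or_pos k with hk0 | hkpos
    · subst hk0
      rw [F, F, F, H, if_neg (Nat.succ_ne_zero 0), H, if_pos rfl]
      simp only [Nat.add_sub_cancel]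
      rw [harg1, harg2, hP0, hP1, hexp, pow_add]
      have hq0 : qPoch q q 0 = 1 := by simp [qPoch]
      rw [hq0]
      simp only [pow_zero, mul_one, zero_add, pow_one] at h1 h2 hTz ⊢
      norm_num
      generalize hT : qPochInf q (a * q ^ 2) = T at hTz ⊢
      field_simp
      ring
    · obtain ⟨m, rfl⟩ : ∃ m, k = m + 1 := ⟨k - 1, by omega⟩
      rw [F, F, F, H, if_neg (Nat.succ_ne_zero (m + 1)), H, if_neg (Nat.succ_ne_zero m)]
      simp only [Nat.add_sub_cancel]
      have hQm : qPoch q q (m + 1) = qPoch q q m * (1 - q ^ (m + 1)) := by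
        rw [qPoch, qPoch, Finset.prod_range_succ, pow_succ']
      have hQm0 := hQ m
      have hq2 := hq1 m
      rw [harg1, harg2, hP0, hP1, hexp, pow_add, hQm]
      generalize hT : qPochInf q (a * q ^ (m + 1 + 2)) = T at hTz ⊢
      generalize hQg : qPoch q q m = Q at hQm0 ⊢
      rw [← mul_div_assoc]
      apply frac5 (c1 := 1) (c2 := 1 - a * q ^ (m + 1))
        (c3 := (1 - a * q ^ (m + 1)) * (1 - a * q ^ (m + 1 + 1)))
        (c4 := 1 - a * q ^ (m + 1)) (c5 := 1 - q ^ (m + 1))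
        (D := Q * (1 - q ^ (m + 1)) * (1 - a * q ^ (m + 1)) * (1 - a * q ^ (m + 1 + 1)) * T)
      · ring
      · ring
      · ring
      · ring
      · ring
      · exact mul_ne_zero (mul_ne_zero (mul_ne_zero (mul_ne_zero hQm0 hq2) h1) h2) hTz
      · ring
end
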